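/- arXiv:1905.04012 — 5 statements merged into one kernel-verified Lean document; each statement's English description precedes it below -/
import Mathlib

section
/- Let n ≥ 1 be an integer and l a real number satisfying l ≥ 2 if n ∈ {1,2,3,4,5}, and l ≥ n/2 − 1 (together with l ≥ 2) if n ≥ 6. Suppose u₀ ∈ H^{l+1}(ℝⁿ) ∩ L^{1,1}(ℝⁿ) and u₁ ∈ H^{l}(ℝⁿ) ∩ L^{1,1}(ℝⁿ). Then there exists a constant C > 0, depending only on n and l, such that for all t ≥ 1, ( ∫_{ℝⁿ} |û(t,ξ)|² dξ )^{1/2} ≤ C·I₀·t^{−n/4}. -/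
open MeasureTheory Real Set

set_option maxHeartbeats 1000000
noncomputable section

namespace DampedPlate

variable {n : ℕ}

/-- `ℝⁿ` as a Euclidean space. -/
abbrev Rn (n : ℕ) := EuclideanSpace ℝ (Fin n)

/-- The Fourier transform `f̂(ξ) = ∫ f(x) e^{-i ξ·x} dx` of a real-valued function. -/
def ftr (f : Rn n → ℝ) (ξ : Rn n) : ℂ :=
  ∫ x : Rn n, (f x : ℂ) * Complex.exp (-Complex.I * ((inner ℝ ξ x : ℝ) : ℂ))

/-- The multiplier `E₀(t,ξ)`. -/
def E0 (ζ t : ℝ) (ξ : Rn n) : ℝ :=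
  if ζ < ‖ξ‖ then
    Real.exp (-t / (2 * (1 + ‖ξ‖ ^ 2))) *
      Real.cos (t * Real.sqrt (4 * ‖ξ‖ ^ 2 * (1 + ‖ξ‖ ^ 2) ^ 2 - 1) / (2 * (1 + ‖ξ‖ ^ 2)))
  else
    Real.exp (-t / (2 * (1 + ‖ξ‖ ^ 2))) *
      Real.cosh (t * Real.sqrt (1 - 4 * ‖ξ‖ ^ 2 * (1 + ‖ξ‖ ^ 2) ^ 2) / (2 * (1 + ‖ξ‖ ^ 2)))

/-- The multiplier `E₁(t,ξ)`. -/
def E1 (ζ t : ℝ) (ξ : Rn n) : ℝ :=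
  if ζ < ‖ξ‖ then
    Real.exp (-t / (2 * (1 + ‖ξ‖ ^ 2))) *
      (Real.sin (t * Real.sqrt (4 * ‖ξ‖ ^ 2 * (1 + ‖ξ‖ ^ 2) ^ 2 - 1) / (2 * (1 + ‖ξ‖ ^ 2))) /
        (Real.sqrt (4 * ‖ξ‖ ^ 2 * (1 + ‖ξ‖ ^ 2) ^ 2 - 1) / (2 * (1 + ‖ξ‖ ^ 2))))
  else
    Real.exp (-t / (2 * (1 + ‖ξ‖ ^ 2))) *
      (Real.sinh (t * Real.sqrt (1 - 4 * ‖ξ‖ ^ 2 * (1 + ‖ξ‖ ^ 2) ^ 2) / (2 * (1 + ‖ξ‖ ^ 2))) /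
        (Real.sqrt (1 - 4 * ‖ξ‖ ^ 2 * (1 + ‖ξ‖ ^ 2) ^ 2) / (2 * (1 + ‖ξ‖ ^ 2))))

/-- The Fourier transform of the solution, expressed in terms of the Fourier transforms
`v₀ = û₀`, `v₁ = û₁` of the initial data:
`û(t,ξ) = û₀(ξ)E₀(t,ξ) + (û₁(ξ) + û₀(ξ)/(2(1+|ξ|²))) E₁(t,ξ)`. -/
def uhatC (ζ : ℝ) (v₀ v₁ : Rn n → ℂ) (t : ℝ) (ξ : Rn n) : ℂ :=
  v₀ ξ * ((E0 ζ t ξ : ℝ) : ℂ) +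
    (v₁ ξ + v₀ ξ * (((1 : ℝ) / (2 * (1 + ‖ξ‖ ^ 2)) : ℝ) : ℂ)) * ((E1 ζ t ξ : ℝ) : ℂ)

/-- The Fourier transform of the solution of the damped plate equation with data `u₀, u₁`. -/
def uhat (ζ : ℝ) (u₀ u₁ : Rn n → ℝ) (t : ℝ) (ξ : Rn n) : ℂ :=
  uhatC ζ (ftr u₀) (ftr u₁) t ξ

/-- The wave-like profile
`û₁(ξ) e^{-t/(2|ξ|²)} sin(t|ξ|)/|ξ| + û₀(ξ) e^{-t/(2|ξ|²)} cos(t|ξ|)`,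
in terms of the Fourier transforms of the data. -/
def waveC (v₀ v₁ : Rn n → ℂ) (t : ℝ) (ξ : Rn n) : ℂ :=
  v₁ ξ * ((Real.exp (-t / (2 * ‖ξ‖ ^ 2)) * (Real.sin (t * ‖ξ‖) / ‖ξ‖) : ℝ) : ℂ) +
    v₀ ξ * ((Real.exp (-t / (2 * ‖ξ‖ ^ 2)) * Real.cos (t * ‖ξ‖) : ℝ) : ℂ)

/-- The wave-like profile for real data `u₀, u₁`. -/
def wave (u₀ u₁ : Rn n → ℝ) (t : ℝ) (ξ : Rn n) : ℂ := waveC (ftr u₀) (ftr u₁) t ξ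

/-- Membership in `H^l`, expressed on the Fourier side. -/
def MemHC (l : ℝ) (v : Rn n → ℂ) : Prop :=
  Integrable fun ξ : Rn n => (1 + ‖ξ‖ ^ 2) ^ l * ‖v ξ‖ ^ 2

/-- The `H^l` norm, expressed on the Fourier side. -/
def HNormC (l : ℝ) (v : Rn n → ℂ) : ℝ :=
  (∫ ξ : Rn n, (1 + ‖ξ‖ ^ 2) ^ l * ‖v ξ‖ ^ 2) ^ ((1 : ℝ) / 2)

/-- `f ∈ H^l(ℝⁿ)`. -/
def MemH (l : ℝ) (f : Rn n → ℝ) : Prop := MemHC l (ftr f)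

/-- `‖f‖_{H^l}`. -/
def HNorm (l : ℝ) (f : Rn n → ℝ) : ℝ := HNormC l (ftr f)

/-- `‖f‖_{1,1} = ∫ (1+|x|)|f(x)| dx`. -/
def Norm11 (f : Rn n → ℝ) : ℝ := ∫ x : Rn n, (1 + ‖x‖) * |f x|

/-- `f ∈ L^{1,1}(ℝⁿ)`. -/
def MemL11 (f : Rn n → ℝ) : Prop :=
  Integrable f ∧ Integrable fun x : Rn n => (1 + ‖x‖) * |f x|

/-- `P_j = ∫ u_j(x) dx`. -/
def Pint (f : Rn n → ℝ) : ℝ := ∫ x : Rn n, f x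

/-- `I₀ = ‖u₁‖_{H^l} + ‖u₀‖_{H^{l+1}} + ‖u₁‖_{1,1} + ‖u₀‖_{1,1}`. -/
def I0 (l : ℝ) (u₀ u₁ : Rn n → ℝ) : ℝ :=
  HNorm l u₁ + HNorm (l + 1) u₀ + Norm11 u₁ + Norm11 u₀

/-- The heat-like profile `(P₁ + P₀) e^{-t|ξ|²}`. -/
def heat (u₀ u₁ : Rn n → ℝ) (t : ℝ) (ξ : Rn n) : ℂ :=
  (((Pint u₁ + Pint u₀) * Real.exp (-t * ‖ξ‖ ^ 2) : ℝ) : ℂ)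

/-- `ζ` is the unique number in `(0,1)` with `4ζ²(1+ζ²)² = 1`. -/
def zetaCond (ζ : ℝ) : Prop := 0 < ζ ∧ ζ < 1 ∧ 4 * ζ ^ 2 * (1 + ζ ^ 2) ^ 2 = 1

end DampedPlate

namespace DampedPlate

variable {n : ℕ}

lemma kernel_norm (f : Rn n → ℝ) (ξ x : Rn n) :
    ‖(f x : ℂ) * Complex.exp (-Complex.I * ((inner ℝ ξ x : ℝ) : ℂ))‖ = |f x| := by
  rw [norm_mul, Complex.norm_real, Complex.norm_exp]
  simp [Real.norm_eq_abs]

lemma norm_ftr_le (f : Rn n → ℝ) (ξ : Rn n) : ‖ftr f ξ‖ ≤ ∫ x, |f x| := by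
  refine (norm_integral_le_integral_norm _).trans_eq ?_
  exact integral_congr_ae (Filter.Eventually.of_forall fun x => kernel_norm f ξ x)

lemma continuous_ftr (f : Rn n → ℝ) (hf : Integrable f) : Continuous (ftr f) := by
  apply continuous_of_dominated (bound := fun x => |f x|)
  · intro ξ
    apply AEStronglyMeasurable.mul
    · exact (Complex.continuous_ofReal.comp_aestronglyMeasurable hf.1)
    · apply Continuous.aestronglyMeasurable
      exact Complex.continuous_exp.comp (continuous_const.mul
        (Complex.continuous_ofReal.comp (continuous_const.inner continuous_id)))
  · intro ξ
    exact Filter.Eventually.of_forall fun x => le_of_eq (kernel_norm f ξ x)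
  · exact hf.abs
  · refine Filter.Eventually.of_forall fun x => ?_
    exact continuous_const.mul (Complex.continuous_exp.comp (continuous_const.mul
      (Complex.continuous_ofReal.comp (continuous_id.inner continuous_const))))

/-! ### elementary real lemmas -/

lemma sqrt_one_sub_le {s : ℝ} (hs0 : 0 ≤ s) (hs1 : s ≤ 1) : Real.sqrt (1 - s) ≤ 1 - s / 2 := by
  have h : (1 - s) ≤ (1 - s / 2) ^ 2 := by nlinarith
  calc Real.sqrt (1 - s) ≤ Real.sqrt ((1 - s / 2) ^ 2) := Real.sqrt_le_sqrt h
    _ = 1 - s / 2 := Real.sqrt_sq (by linarith)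

lemma my_cosh_le_exp {y : ℝ} (hy : 0 ≤ y) : Real.cosh y ≤ Real.exp y := by
  rw [Real.cosh_eq]
  have := Real.exp_le_exp.2 (neg_le_self hy)
  linarith

lemma my_sinh_le_half_exp (y : ℝ) : Real.sinh y ≤ Real.exp y / 2 := by
  rw [Real.sinh_eq]; linarith [Real.exp_pos (-y)]

lemma my_sinh_le_mul_exp {y : ℝ} (hy : 0 ≤ y) : Real.sinh y ≤ y * Real.exp y := by
  rw [Real.sinh_eq]
  have h := Real.add_one_le_exp (-(2 * y))
  have h2 : Real.exp (-y) = Real.exp y * Real.exp (-(2 * y)) := by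
    rw [← Real.exp_add]; ring_nf
  nlinarith [Real.exp_pos y]

lemma pow_mul_exp_neg_le (m : ℕ) {x : ℝ} (hx : 0 ≤ x) :
    x ^ m * Real.exp (-x) ≤ m.factorial := by
  have h := Real.pow_div_factorial_le_exp x hx m
  have hf : (0:ℝ) < m.factorial := by exact_mod_cast m.factorial_pos
  have h1 : x ^ m ≤ Real.exp x * m.factorial := by
    rw [div_le_iff₀ hf] at h; linarith
  have h2 : Real.exp x * Real.exp (-x) = 1 := by rw [← Real.exp_add]; simp
  calc x ^ m * Real.exp (-x) ≤ (Real.exp x * m.factorial) * Real.exp (-x) :=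
        mul_le_mul_of_nonneg_right h1 (Real.exp_pos _).le
    _ = (Real.exp x * Real.exp (-x)) * m.factorial := by ring
    _ = m.factorial := by rw [h2, one_mul]

lemma rpow_mul_exp_neg_le {p : ℝ} (hp : 0 ≤ p) {x : ℝ} (hx : 0 ≤ x) :
    x ^ p * Real.exp (-x) ≤ (Nat.ceil p).factorial := by
  have hf : (1:ℝ) ≤ (Nat.ceil p).factorial := by exact_mod_cast (Nat.ceil p).factorial_pos
  rcases le_or_gt x 1 with h1 | h1
  · have h2 : x ^ p ≤ 1 := Real.rpow_le_one hx h1 hp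
    have h3 : Real.exp (-x) ≤ 1 := Real.exp_le_one_iff.2 (by linarith)
    nlinarith [Real.exp_pos (-x), Real.rpow_nonneg hx p]
  · have h2 : x ^ p ≤ x ^ ((Nat.ceil p : ℕ) : ℝ) :=
      Real.rpow_le_rpow_of_exponent_le h1.le (Nat.le_ceil p)
    calc x ^ p * Real.exp (-x) ≤ x ^ ((Nat.ceil p : ℕ) : ℝ) * Real.exp (-x) :=
          mul_le_mul_of_nonneg_right h2 (Real.exp_pos _).le
      _ = x ^ (Nat.ceil p) * Real.exp (-x) := by rw [Real.rpow_natCast]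
      _ ≤ _ := pow_mul_exp_neg_le _ (by linarith)

lemma rpow_mul_exp_le (q c : ℝ) (hq : 0 ≤ q) (hc : 0 < c) :
    ∃ M : ℝ, 0 < M ∧ ∀ x : ℝ, 0 ≤ x → x ^ q * Real.exp (-(c * x)) ≤ M := by
  refine ⟨c ^ (-q) * (Nat.ceil q).factorial, by positivity, fun x hx => ?_⟩
  have h := rpow_mul_exp_neg_le hq (x := c * x) (by positivity)
  have hcx : (c * x) ^ q = c ^ q * x ^ q := Real.mul_rpow hc.le hx
  have hcq : c ^ (-q) * c ^ q = 1 := by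
    rw [← Real.rpow_add hc]; simp
  have h0 : x ^ q = c ^ (-q) * ((c * x) ^ q) := by
    rw [hcx, ← mul_assoc, hcq, one_mul]
  rw [h0, mul_assoc]
  exact mul_le_mul_of_nonneg_left h (by positivity)

/-! ### measurability -/

lemma measurable_E0 (ζ t : ℝ) : Measurable fun ξ : Rn n => E0 ζ t ξ := by
  unfold E0
  refine Measurable.ite (measurableSet_lt measurable_const measurable_norm) ?_ ?_ <;> fun_prop

lemma measurable_E1 (ζ t : ℝ) : Measurable fun ξ : Rn n => E1 ζ t ξ := by
  unfold E1
  refine Measurable.ite (measurableSet_lt measurable_const measurable_norm) ?_ ?_ <;> fun_prop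

/-! ### bounds on the multipliers -/

lemma s_le_one {ζ : ℝ} (hζ : zetaCond ζ) {r : ℝ} (hr0 : 0 ≤ r) (hr : r ≤ ζ) :
    4 * r ^ 2 * (1 + r ^ 2) ^ 2 ≤ 1 := by
  obtain ⟨hζ0, hζ1, hζe⟩ := hζ
  have h1 : r ^ 2 ≤ ζ ^ 2 := by nlinarith
  have h2 : (1 + r ^ 2) ^ 2 ≤ (1 + ζ ^ 2) ^ 2 := by nlinarith
  have h3 : r ^ 2 * (1 + r ^ 2) ^ 2 ≤ ζ ^ 2 * (1 + ζ ^ 2) ^ 2 :=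
    mul_le_mul h1 h2 (by positivity) (by positivity)
  nlinarith [h3]

lemma low_gap {t r a s : ℝ} (ht : 0 ≤ t) (ha0 : 0 < a) (hseq : s = 4 * r ^ 2 * a ^ 2)
    (hs0 : 0 ≤ s) (hs1 : s ≤ 1) :
    -t / (2 * a) + t * Real.sqrt (1 - s) / (2 * a) ≤ -(t * (r ^ 2 * a)) := by
  have hsq := sqrt_one_sub_le hs0 hs1
  have h4 : t * (s / 2) ≤ t * (1 - Real.sqrt (1 - s)) :=
    mul_le_mul_of_nonneg_left (by linarith) ht
  rw [← add_div, div_le_iff₀ (by positivity : (0:ℝ) < 2 * a)]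
  nlinarith [h4]

lemma E0_low_real {ζ t r : ℝ} (hζ : zetaCond ζ) (ht : 0 ≤ t) (hr0 : 0 ≤ r) (hrζ : r ≤ ζ) :
    |Real.exp (-t / (2 * (1 + r ^ 2))) *
      Real.cosh (t * Real.sqrt (1 - 4 * r ^ 2 * (1 + r ^ 2) ^ 2) / (2 * (1 + r ^ 2)))|
      ≤ Real.exp (-(t * (r ^ 2 * (1 + r ^ 2)))) := by
  have hs1 : 4 * r ^ 2 * (1 + r ^ 2) ^ 2 ≤ 1 := s_le_one hζ hr0 hrζ
  obtain ⟨a, hadef⟩ : ∃ a : ℝ, 1 + r ^ 2 = a := ⟨_, rfl⟩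
  have ha0 : 0 < a := by rw [← hadef]; positivity
  rw [hadef] at hs1 ⊢
  obtain ⟨s, hsdef⟩ : ∃ s : ℝ, 4 * r ^ 2 * a ^ 2 = s := ⟨_, rfl⟩
  have hs0 : 0 ≤ s := by rw [← hsdef]; positivity
  rw [hsdef] at hs1 ⊢
  have hβt : 0 ≤ t * Real.sqrt (1 - s) / (2 * a) :=
    div_nonneg (mul_nonneg ht (Real.sqrt_nonneg _)) (by linarith)
  rw [abs_of_nonneg (mul_nonneg (Real.exp_pos _).le (Real.cosh_pos _).le)]
  have h2 : Real.exp (-t / (2 * a)) * Real.cosh (t * Real.sqrt (1 - s) / (2 * a))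
      ≤ Real.exp (-t / (2 * a) + t * Real.sqrt (1 - s) / (2 * a)) := by
    rw [Real.exp_add]
    exact mul_le_mul_of_nonneg_left (my_cosh_le_exp hβt) (Real.exp_pos _).le
  exact h2.trans (Real.exp_le_exp.2 (low_gap ht ha0 hsdef.symm hs0 hs1))

lemma E0_low {ζ : ℝ} (hζ : zetaCond ζ) {t : ℝ} (ht : 0 ≤ t) {ξ : Rn n} (h : ¬ ζ < ‖ξ‖) :
    |E0 ζ t ξ| ≤ Real.exp (-(t * (‖ξ‖ ^ 2 * (1 + ‖ξ‖ ^ 2)))) := by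
  unfold E0
  rw [if_neg h]
  exact E0_low_real hζ ht (norm_nonneg ξ) (not_lt.1 h)

lemma E0_high {ζ t : ℝ} {ξ : Rn n} (h : ζ < ‖ξ‖) :
    |E0 ζ t ξ| ≤ Real.exp (-t / (2 * (1 + ‖ξ‖ ^ 2))) := by
  unfold E0
  rw [if_pos h, abs_mul, abs_of_nonneg (Real.exp_pos _).le]
  exact (mul_le_mul_of_nonneg_left (Real.abs_cos_le_one _) (Real.exp_pos _).le).trans_eq
    (mul_one _)

lemma E1_high_t {ζ : ℝ} {t : ℝ} (ht : 0 ≤ t) {ξ : Rn n} (h : ζ < ‖ξ‖) :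
    |E1 ζ t ξ| ≤ t * Real.exp (-t / (2 * (1 + ‖ξ‖ ^ 2))) := by
  unfold E1
  rw [if_pos h]
  set r : ℝ := ‖ξ‖ with hrdef
  set a : ℝ := 1 + r ^ 2 with hadef
  have ha0 : (0:ℝ) < a := by positivity
  set w : ℝ := Real.sqrt (4 * r ^ 2 * a ^ 2 - 1) with hwdef
  rw [abs_mul, abs_of_nonneg (Real.exp_pos _).le]
  have key : |Real.sin (t * w / (2 * a)) / (w / (2 * a))| ≤ t := by
    rcases eq_or_lt_of_le (Real.sqrt_nonneg (4 * r ^ 2 * a ^ 2 - 1) : (0:ℝ) ≤ w) with h0 | h0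
    · rw [show w = (0:ℝ) from (hwdef.trans h0.symm)]
      simp [ht]
    · have hwa : 0 < w / (2 * a) := by positivity
      rw [abs_div, abs_of_nonneg hwa.le, div_le_iff₀ hwa]
      calc |Real.sin (t * w / (2 * a))| ≤ |t * w / (2 * a)| := Real.abs_sin_le_abs
        _ = t * (w / (2 * a)) := by rw [abs_of_nonneg (by positivity), mul_div_assoc]
  calc Real.exp (-t / (2 * a)) * |Real.sin (t * w / (2 * a)) / (w / (2 * a))|
      ≤ Real.exp (-t / (2 * a)) * t := mul_le_mul_of_nonneg_left key (Real.exp_pos _).le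
    _ = t * Real.exp (-t / (2 * a)) := mul_comm _ _

lemma E1_high_r {ζ : ℝ} (hζ1 : ζ < 1) (t : ℝ) {ξ : Rn n} (h : 1 < ‖ξ‖) :
    |E1 ζ t ξ| ≤ (2 / ‖ξ‖) * Real.exp (-t / (2 * (1 + ‖ξ‖ ^ 2))) := by
  have hb : ζ < ‖ξ‖ := lt_trans hζ1 h
  unfold E1
  rw [if_pos hb]
  set r : ℝ := ‖ξ‖ with hrdef
  have hr1 : 1 < r := h
  set a : ℝ := 1 + r ^ 2 with hadef
  have ha0 : (0:ℝ) < a := by positivity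
  have hra : 1 ≤ r * a := by nlinarith
  have hw : r * a ≤ Real.sqrt (4 * r ^ 2 * a ^ 2 - 1) := by
    rw [show r * a = Real.sqrt ((r * a) ^ 2) from (Real.sqrt_sq (by positivity)).symm]
    apply Real.sqrt_le_sqrt
    nlinarith
  set w : ℝ := Real.sqrt (4 * r ^ 2 * a ^ 2 - 1) with hwdef
  have hw0 : (0:ℝ) < w := lt_of_lt_of_le (by positivity) hw
  rw [abs_mul, abs_of_nonneg (Real.exp_pos _).le, abs_div]
  have hq : |Real.sin (t * w / (2 * a))| / |w / (2 * a)| ≤ 2 / r := by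
    rw [abs_of_nonneg (by positivity : (0:ℝ) ≤ w / (2 * a)),
      div_le_div_iff₀ (by positivity) (by positivity : (0:ℝ) < r)]
    have h1 : |Real.sin (t * w / (2 * a))| ≤ 1 := Real.abs_sin_le_one _
    have h2 : 2 * (w / (2 * a)) = w / a := by field_simp
    rw [h2, le_div_iff₀ ha0]
    nlinarith [mul_le_mul_of_nonneg_right h1 (by positivity : (0:ℝ) ≤ r * a)]
  calc Real.exp (-t / (2 * a)) * (|Real.sin (t * w / (2 * a))| / |w / (2 * a)|)
      ≤ Real.exp (-t / (2 * a)) * (2 / r) := mul_le_mul_of_nonneg_left hq (Real.exp_pos _).le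
    _ = (2 / r) * Real.exp (-t / (2 * a)) := mul_comm _ _

lemma E1_low_t_real {ζ t r : ℝ} (hζ : zetaCond ζ) (ht : 0 ≤ t) (hr0 : 0 ≤ r) (hrζ : r ≤ ζ) :
    |Real.exp (-t / (2 * (1 + r ^ 2))) *
      (Real.sinh (t * Real.sqrt (1 - 4 * r ^ 2 * (1 + r ^ 2) ^ 2) / (2 * (1 + r ^ 2))) /
        (Real.sqrt (1 - 4 * r ^ 2 * (1 + r ^ 2) ^ 2) / (2 * (1 + r ^ 2))))|
      ≤ t * Real.exp (-(t * (r ^ 2 * (1 + r ^ 2)))) := by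
  have hs1 : 4 * r ^ 2 * (1 + r ^ 2) ^ 2 ≤ 1 := s_le_one hζ hr0 hrζ
  obtain ⟨a, hadef⟩ : ∃ a : ℝ, 1 + r ^ 2 = a := ⟨_, rfl⟩
  have ha0 : 0 < a := by rw [← hadef]; positivity
  rw [hadef] at hs1 ⊢
  obtain ⟨s, hsdef⟩ : ∃ s : ℝ, 4 * r ^ 2 * a ^ 2 = s := ⟨_, rfl⟩
  have hs0 : 0 ≤ s := by rw [← hsdef]; positivity
  rw [hsdef] at hs1 ⊢
  rcases eq_or_lt_of_le (Real.sqrt_nonneg (1 - s)) with h0 | h0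
  · rw [← h0]
    simp
    positivity
  · obtain ⟨w, hwdef⟩ : ∃ w : ℝ, Real.sqrt (1 - s) = w := ⟨_, rfl⟩
    rw [hwdef] at h0 ⊢
    have hβ : 0 < w / (2 * a) := div_pos h0 (by linarith)
    have htβ : 0 ≤ t * w / (2 * a) := div_nonneg (mul_nonneg ht h0.le) (by linarith)
    have hsh : 0 ≤ Real.sinh (t * w / (2 * a)) := Real.sinh_nonneg_iff.2 htβ
    rw [abs_of_nonneg (mul_nonneg (Real.exp_pos _).le (div_nonneg hsh hβ.le))]
    have h1 : Real.sinh (t * w / (2 * a)) / (w / (2 * a)) ≤ t * Real.exp (t * w / (2 * a)) := by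
      rw [div_le_iff₀ hβ]
      calc Real.sinh (t * w / (2 * a)) ≤ (t * w / (2 * a)) * Real.exp (t * w / (2 * a)) :=
            my_sinh_le_mul_exp htβ
        _ = t * Real.exp (t * w / (2 * a)) * (w / (2 * a)) := by ring
    calc Real.exp (-t / (2 * a)) * (Real.sinh (t * w / (2 * a)) / (w / (2 * a)))
        ≤ Real.exp (-t / (2 * a)) * (t * Real.exp (t * w / (2 * a))) :=
          mul_le_mul_of_nonneg_left h1 (Real.exp_pos _).le
      _ = t * Real.exp (-t / (2 * a) + t * w / (2 * a)) := by rw [Real.exp_add]; ring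
      _ ≤ t * Real.exp (-(t * (r ^ 2 * a))) := by
          have hg := low_gap (t := t) (r := r) (a := a) (s := s) ht ha0 hsdef.symm hs0 hs1
          rw [hwdef] at hg
          exact mul_le_mul_of_nonneg_left (Real.exp_le_exp.2 hg) ht

lemma E1_low_t {ζ : ℝ} (hζ : zetaCond ζ) {t : ℝ} (ht : 0 ≤ t) {ξ : Rn n} (h : ¬ ζ < ‖ξ‖) :
    |E1 ζ t ξ| ≤ t * Real.exp (-(t * (‖ξ‖ ^ 2 * (1 + ‖ξ‖ ^ 2)))) := by
  unfold E1
  rw [if_neg h]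
  exact E1_low_t_real hζ ht (norm_nonneg ξ) (not_lt.1 h)

lemma E1_low_bdd_real {ζ t r : ℝ} (hζ : zetaCond ζ) (ht : 0 ≤ t) (hr0 : 0 ≤ r)
    (hx : r ≤ ζ / 2) :
    |Real.exp (-t / (2 * (1 + r ^ 2))) *
      (Real.sinh (t * Real.sqrt (1 - 4 * r ^ 2 * (1 + r ^ 2) ^ 2) / (2 * (1 + r ^ 2))) /
        (Real.sqrt (1 - 4 * r ^ 2 * (1 + r ^ 2) ^ 2) / (2 * (1 + r ^ 2))))|
      ≤ 4 * Real.exp (-(t * (r ^ 2 * (1 + r ^ 2)))) := by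
  obtain ⟨hζ0, hζ1, hζe⟩ := hζ
  have hrζ : r ≤ ζ := hx.trans (by linarith)
  have hs1 : 4 * r ^ 2 * (1 + r ^ 2) ^ 2 ≤ 1 := s_le_one ⟨hζ0, hζ1, hζe⟩ hr0 hrζ
  have h1 : r ^ 2 ≤ ζ ^ 2 / 4 := by nlinarith
  have h2 : (1 + r ^ 2) ^ 2 ≤ (1 + ζ ^ 2) ^ 2 := by nlinarith
  have h3 : r ^ 2 * (1 + r ^ 2) ^ 2 ≤ ζ ^ 2 / 4 * (1 + ζ ^ 2) ^ 2 :=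
    mul_le_mul h1 h2 (by positivity) (by positivity)
  have hs14 : 4 * r ^ 2 * (1 + r ^ 2) ^ 2 ≤ 1 / 4 := by nlinarith [h3]
  have ha2 : (1 + r ^ 2 : ℝ) ≤ 2 := by nlinarith
  obtain ⟨a, hadef⟩ : ∃ a : ℝ, 1 + r ^ 2 = a := ⟨_, rfl⟩
  have ha0 : 0 < a := by rw [← hadef]; positivity
  rw [hadef] at hs1 hs14 ha2 ⊢
  obtain ⟨s, hsdef⟩ : ∃ s : ℝ, 4 * r ^ 2 * a ^ 2 = s := ⟨_, rfl⟩
  have hs0 : 0 ≤ s := by rw [← hsdef]; positivity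
  rw [hsdef] at hs1 hs14 ⊢
  have hw12 : (1/2 : ℝ) ≤ Real.sqrt (1 - s) := by
    have ha' : Real.sqrt (1/4 : ℝ) ≤ Real.sqrt (1 - s) := Real.sqrt_le_sqrt (by linarith)
    rwa [show (1/4 : ℝ) = (1/2) ^ 2 by norm_num, Real.sqrt_sq (by norm_num)] at ha'
  obtain ⟨w, hwdef⟩ : ∃ w : ℝ, Real.sqrt (1 - s) = w := ⟨_, rfl⟩
  rw [hwdef] at hw12 ⊢
  have hw0 : (0:ℝ) < w := lt_of_lt_of_le (by norm_num) hw12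
  have hβ : 0 < w / (2 * a) := div_pos hw0 (by linarith)
  have htβ : 0 ≤ t * w / (2 * a) := div_nonneg (mul_nonneg ht hw0.le) (by linarith)
  have hsh : 0 ≤ Real.sinh (t * w / (2 * a)) := Real.sinh_nonneg_iff.2 htβ
  rw [abs_of_nonneg (mul_nonneg (Real.exp_pos _).le (div_nonneg hsh hβ.le))]
  have h8 : (1:ℝ) / 8 ≤ w / (2 * a) := by
    rw [le_div_iff₀ (by linarith : (0:ℝ) < 2 * a)]; nlinarith
  have h4 : Real.sinh (t * w / (2 * a)) / (w / (2 * a))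
      ≤ 4 * Real.exp (t * w / (2 * a)) := by
    rw [div_le_iff₀ hβ]
    nlinarith [my_sinh_le_half_exp (t * w / (2 * a)), h8, Real.exp_pos (t * w / (2 * a))]
  calc Real.exp (-t / (2 * a)) * (Real.sinh (t * w / (2 * a)) / (w / (2 * a)))
      ≤ Real.exp (-t / (2 * a)) * (4 * Real.exp (t * w / (2 * a))) :=
        mul_le_mul_of_nonneg_left h4 (Real.exp_pos _).le
    _ = 4 * Real.exp (-t / (2 * a) + t * w / (2 * a)) := by rw [Real.exp_add]; ring
    _ ≤ 4 * Real.exp (-(t * (r ^ 2 * a))) := by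
        have hg := low_gap (t := t) (r := r) (a := a) (s := s) ht ha0 hsdef.symm hs0 hs1
        rw [hwdef] at hg
        have h5 := Real.exp_le_exp.2 hg
        linarith

lemma E1_low_bounded {ζ : ℝ} (hζ : zetaCond ζ) {t : ℝ} (ht : 0 ≤ t) {ξ : Rn n}
    (hx : ‖ξ‖ ≤ ζ / 2) :
    |E1 ζ t ξ| ≤ 4 * Real.exp (-(t * (‖ξ‖ ^ 2 * (1 + ‖ξ‖ ^ 2)))) := by
  have h : ¬ ζ < ‖ξ‖ := not_lt.2 (hx.trans (by linarith [hζ.1]))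
  unfold E1
  rw [if_neg h]
  exact E1_low_bdd_real hζ ht (norm_nonneg ξ) hx

lemma ineq_sq1 (x y T : ℝ) : ((1 + T) * (x + y)) ^ 2 ≤ 2 * (1 + T) ^ 2 * (x ^ 2 + y ^ 2) := by
  nlinarith [sq_nonneg ((1 + T) * (x - y))]

lemma ineq_lin1 {x y t : ℝ} (hx : 0 ≤ x) (hy : 0 ≤ y) (ht : 1 ≤ t) :
    x + (y + x / 2) * t ≤ (1 + t) * (x + y) := by
  nlinarith [mul_nonneg (by linarith : (0:ℝ) ≤ t) hx, mul_nonneg (by linarith : (0:ℝ) ≤ t) hy]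

lemma ineq_sq2 (x y : ℝ) : (3 / 2 * x + y) ^ 2 ≤ 5 * (x ^ 2 + y ^ 2) := by
  nlinarith [sq_nonneg (x - y), sq_nonneg (3 * x - 2 * y)]

lemma ineq_sq3 (x v : ℝ) : (2 * x + 2 * v) ^ 2 ≤ 8 * x ^ 2 + 8 * v ^ 2 := by
  nlinarith [sq_nonneg (x - v)]

lemma ineq_B {x y t e u : ℝ} (hx : 0 ≤ x) (he : 0 < e) (ht : 1 ≤ t)
    (hu : u ≤ x * e + (y + x / 2) * (t * e)) : u ≤ (3 / 2 * x + y) * (t * e) := by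
  nlinarith [mul_nonneg (mul_nonneg hx he.le) (by linarith : (0:ℝ) ≤ t - 1)]

lemma ineq_C {x y r e u : ℝ} (hr : 1 < r) (hx : 0 ≤ x) (hy : 0 ≤ y) (he : 0 < e)
    (hu : u ≤ x * e + (y + x / 2) * ((2 / r) * e)) : u ≤ (2 * x + (2 / r) * y) * e := by
  have hrpos : (0:ℝ) < r := by linarith
  have h1 : x / 2 * (2 / r) ≤ x := by
    rw [show x / 2 * (2 / r) = x * (1 / r) by ring]
    have : 1 / r ≤ 1 := by rw [div_le_one hrpos]; linarith
    nlinarith [mul_le_mul_of_nonneg_left this hx]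
  nlinarith [mul_le_mul_of_nonneg_right h1 he.le]

lemma ineq_r2 {y r : ℝ} (hr : 1 ≤ r ^ 2) : 8 * y ^ 2 * (1 + r ^ 2) ≤ 16 * y ^ 2 * r ^ 2 := by
  nlinarith [mul_nonneg (sq_nonneg y) (sub_nonneg.2 hr)]

lemma ineq_mono {t r : ℝ} (ht : 0 ≤ t) : -(t * (r ^ 2 * (1 + r ^ 2))) ≤ -t * r ^ 2 := by
  nlinarith [mul_nonneg (mul_nonneg ht (sq_nonneg r)) (sq_nonneg r)]

lemma integral_abs_le_norm11 (f : Rn n → ℝ) (hf : MemL11 f) : (∫ x, |f x|) ≤ Norm11 f := by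
  refine integral_mono hf.1.abs hf.2 fun x => ?_
  have h1 : (1:ℝ) ≤ 1 + ‖x‖ := by linarith [norm_nonneg x]
  exact le_mul_of_one_le_left (abs_nonneg _) h1

lemma norm_ftr_le_norm11 (f : Rn n → ℝ) (hf : MemL11 f) (ξ : Rn n) : ‖ftr f ξ‖ ≤ Norm11 f :=
  (norm_ftr_le f ξ).trans (integral_abs_le_norm11 f hf)

lemma HNorm_nonneg (l : ℝ) (f : Rn n → ℝ) : 0 ≤ HNorm l f :=
  Real.rpow_nonneg (integral_nonneg fun ξ => by positivity) _

lemma Norm11_nonneg (f : Rn n → ℝ) : 0 ≤ Norm11 f :=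
  integral_nonneg fun x => by positivity

lemma E0_abs_le_one {ζ : ℝ} (hζ : zetaCond ζ) {t : ℝ} (ht : 0 ≤ t) (ξ : Rn n) :
    |E0 ζ t ξ| ≤ 1 := by
  rcases lt_or_ge ζ ‖ξ‖ with h | h
  · refine (E0_high h).trans (Real.exp_le_one_iff.2 ?_)
    have h1 : (0:ℝ) ≤ t / (2 * (1 + ‖ξ‖ ^ 2)) := by positivity
    rw [neg_div]; linarith
  · refine (E0_low hζ ht (not_lt.2 h)).trans (Real.exp_le_one_iff.2 ?_)
    have h2 : (0:ℝ) ≤ t * (‖ξ‖ ^ 2 * (1 + ‖ξ‖ ^ 2)) := by positivity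
    linarith

lemma E1_abs_le_t {ζ : ℝ} (hζ : zetaCond ζ) {t : ℝ} (ht : 0 ≤ t) (ξ : Rn n) :
    |E1 ζ t ξ| ≤ t := by
  rcases lt_or_ge ζ ‖ξ‖ with h | h
  · refine (E1_high_t ht h).trans ?_
    have h1 : Real.exp (-t / (2 * (1 + ‖ξ‖ ^ 2))) ≤ 1 := by
      apply Real.exp_le_one_iff.2
      have h2 : (0:ℝ) ≤ t / (2 * (1 + ‖ξ‖ ^ 2)) := by positivity
      rw [neg_div]; linarith
    nlinarith [ht, h1, Real.exp_pos (-t / (2 * (1 + ‖ξ‖ ^ 2)))]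
  · refine (E1_low_t hζ ht (not_lt.2 h)).trans ?_
    have h1 : Real.exp (-(t * (‖ξ‖ ^ 2 * (1 + ‖ξ‖ ^ 2)))) ≤ 1 := by
      apply Real.exp_le_one_iff.2
      have h2 : (0:ℝ) ≤ t * (‖ξ‖ ^ 2 * (1 + ‖ξ‖ ^ 2)) := by positivity
      linarith
    nlinarith [ht, h1, Real.exp_pos (-(t * (‖ξ‖ ^ 2 * (1 + ‖ξ‖ ^ 2))))]

lemma uhat_norm_le (ζ : ℝ) (u₀ u₁ : Rn n → ℝ) (t : ℝ) (ξ : Rn n) :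
    ‖uhat ζ u₀ u₁ t ξ‖ ≤ ‖ftr u₀ ξ‖ * |E0 ζ t ξ| +
      (‖ftr u₁ ξ‖ + ‖ftr u₀ ξ‖ / 2) * |E1 ζ t ξ| := by
  unfold uhat uhatC
  refine (norm_add_le _ _).trans ?_
  have h1 : ‖ftr u₀ ξ * ((E0 ζ t ξ : ℝ) : ℂ)‖ = ‖ftr u₀ ξ‖ * |E0 ζ t ξ| := by
    rw [norm_mul, Complex.norm_real, Real.norm_eq_abs]
  have h2 : ‖(ftr u₁ ξ + ftr u₀ ξ * (((1 : ℝ) / (2 * (1 + ‖ξ‖ ^ 2)) : ℝ) : ℂ)) *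
      ((E1 ζ t ξ : ℝ) : ℂ)‖ ≤ (‖ftr u₁ ξ‖ + ‖ftr u₀ ξ‖ / 2) * |E1 ζ t ξ| := by
    rw [norm_mul, Complex.norm_real, Real.norm_eq_abs]
    apply mul_le_mul_of_nonneg_right _ (abs_nonneg _)
    refine (norm_add_le _ _).trans ?_
    rw [norm_mul, Complex.norm_real, Real.norm_eq_abs]
    have hc : |(1 : ℝ) / (2 * (1 + ‖ξ‖ ^ 2))| ≤ 1 / 2 := by
      rw [abs_of_nonneg (by positivity)]
      rw [div_le_div_iff₀ (by positivity) (by norm_num)]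
      nlinarith [sq_nonneg ‖ξ‖]
    nlinarith [norm_nonneg (ftr u₀ ξ), hc]
  rw [h1]
  exact add_le_add_right h2 _

lemma gauss_integral (b : ℝ) (hb : 0 < b) :
    ∫ ξ : Rn n, Real.exp (-b * ‖ξ‖ ^ 2) = (Real.pi / b) ^ ((n : ℝ) / 2) := by
  rw [GaussianFourier.integral_rexp_neg_mul_sq_norm hb]
  norm_num [finrank_euclideanSpace_fin]

lemma gauss_integrable (b : ℝ) (hb : 0 < b) :
    Integrable fun ξ : Rn n => Real.exp (-b * ‖ξ‖ ^ 2) := by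
  have h := (GaussianFourier.integrable_cexp_neg_mul_sq_norm_add (V := Rn n)
    (b := (b : ℂ)) (by simpa using hb) 0 0).norm
  apply h.congr
  filter_upwards with v
  rw [Complex.norm_exp]
  norm_num
  left
  rw [← Complex.ofReal_pow, Complex.ofReal_re]

lemma pi_div_rpow_le {t : ℝ} (ht : 1 ≤ t) (p : ℝ) (hp : 0 ≤ p) :
    (Real.pi / (2 * t)) ^ p ≤ Real.pi ^ p * t ^ (-p) := by
  have ht0 : (0:ℝ) < t := by linarith
  have h1 : t ^ p ≤ (2 * t) ^ p := Real.rpow_le_rpow ht0.le (by linarith) hp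
  have h2 : (0:ℝ) < t ^ p := Real.rpow_pos_of_pos ht0 p
  calc (Real.pi / (2 * t)) ^ p = Real.pi ^ p / (2 * t) ^ p :=
        Real.div_rpow Real.pi_pos.le (by positivity) _
    _ ≤ Real.pi ^ p / t ^ p :=
        div_le_div_of_nonneg_left (by positivity) h2 h1
    _ = Real.pi ^ p * t ^ (-p) := by rw [Real.rpow_neg ht0.le, div_eq_mul_inv]

lemma rpow_half_le {x K : ℝ} (hx : 0 ≤ x) (hK : 0 ≤ K) (h : x ≤ K ^ 2) :
    x ^ ((1 : ℝ) / 2) ≤ K := by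
  calc x ^ ((1:ℝ)/2) ≤ (K ^ 2) ^ ((1:ℝ)/2) := Real.rpow_le_rpow hx h (by norm_num)
    _ = (K ^ ((2:ℕ) : ℝ)) ^ ((1:ℝ)/2) := by rw [Real.rpow_natCast]
    _ = K ^ (((2:ℕ) : ℝ) * ((1:ℝ)/2)) := (Real.rpow_mul hK _ _).symm
    _ = K := by norm_num

lemma le_sq_of_rpow_half_le {x N : ℝ} (hx : 0 ≤ x) (h : x ^ ((1:ℝ)/2) ≤ N) : x ≤ N ^ 2 := by
  have h0 : 0 ≤ x ^ ((1:ℝ)/2) := Real.rpow_nonneg hx _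
  have h1 : (x ^ ((1:ℝ)/2)) ^ (2:ℕ) ≤ N ^ 2 := by nlinarith
  rwa [← Real.rpow_natCast (x ^ ((1:ℝ)/2)) 2, ← Real.rpow_mul hx,
    show (1:ℝ)/2 * ((2:ℕ) : ℝ) = 1 by norm_num, Real.rpow_one] at h1

lemma Bexp_high {ζ t r : ℝ} (hζ0 : 0 < ζ) (hζ1 : ζ < 1) (ht : 0 ≤ t) (hr0 : 0 ≤ r) (hr1 : r ≤ 1) :
    -t / (2 * (1 + r ^ 2)) ≤ -(ζ ^ 2 / 4 * t) := by
  have h1 : 2 * (1 + r ^ 2) ≤ 4 := by nlinarith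
  have h2 : t / 4 ≤ t / (2 * (1 + r ^ 2)) := by
    rw [div_le_div_iff₀ (by norm_num) (by positivity)]
    nlinarith [mul_le_mul_of_nonneg_left h1 ht]
  have h3 : ζ ^ 2 ≤ 1 := by nlinarith
  have h4 : ζ ^ 2 / 4 * t ≤ t / 4 := by nlinarith [mul_le_mul_of_nonneg_right h3 ht]
  rw [neg_div]
  linarith

lemma Bexp_low {ζ t r : ℝ} (hζ0 : 0 < ζ) (ht : 0 ≤ t) (hr : ζ / 2 < r) (hr0 : 0 ≤ r) :
    -(t * (r ^ 2 * (1 + r ^ 2))) ≤ -(ζ ^ 2 / 4 * t) := by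
  have h1 : ζ ^ 2 / 4 ≤ r ^ 2 := by nlinarith
  have h2 : r ^ 2 ≤ r ^ 2 * (1 + r ^ 2) := by nlinarith [sq_nonneg r]
  nlinarith [mul_le_mul_of_nonneg_left (h1.trans h2) ht]

end DampedPlate




open DampedPlate

/-- **Theorem 5.2** (optimal `L²` decay in the parabolic-like regime). -/
theorem stmt_13 (n : ℕ) (hn : 1 ≤ n) (l : ℝ) (hl : 2 ≤ l)
    (hl2 : 6 ≤ n → (n : ℝ) / 2 - 1 ≤ l)
    (ζ : ℝ) (hζ : zetaCond ζ) :
    ∃ C > (0 : ℝ), ∀ u₀ u₁ : Rn n → ℝ,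
      MemH (l + 1) u₀ → MemL11 u₀ → MemH l u₁ → MemL11 u₁ →
      ∀ t : ℝ, 1 ≤ t →
        (∫ ξ : Rn n, ‖uhat ζ u₀ u₁ t ξ‖ ^ 2) ^ ((1 : ℝ) / 2) ≤
          C * I0 l u₀ u₁ * t ^ (-((n : ℝ) / 4)) := by
  obtain ⟨hζ0, hζ1, hζe⟩ := hζ
  have hζ' : zetaCond ζ := ⟨hζ0, hζ1, hζe⟩
  have hnl : (n : ℝ) / 2 ≤ l + 1 := by
    rcases le_or_gt 6 n with h6 | h6
    · linarith only [hl2 h6]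
    · have h5 : (n : ℝ) ≤ 5 := by exact_mod_cast Nat.lt_succ_iff.mp h6
      linarith only [h5, hl]
  obtain ⟨M₂, hM₂0, hM₂⟩ := rpow_mul_exp_le ((n : ℝ) / 2 + 2) (ζ ^ 2 / 2)
    (by positivity) (by positivity)
  obtain ⟨M₃, hM₃0, hM₃⟩ := rpow_mul_exp_le (l + 1) 1 (by linarith only [hl]) one_pos
  set Ctot : ℝ := 49 * Real.pi ^ ((n : ℝ) / 2) + 10 * M₂ + 24 * M₃ with hCtotdef
  have hCtot0 : 0 < Ctot := by positivity
  refine ⟨Real.sqrt Ctot, Real.sqrt_pos.2 hCtot0, fun u₀ u₁ hH0 hL0 hH1 hL1 t ht => ?_⟩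
  have ht0 : (0:ℝ) < t := lt_of_lt_of_le one_pos ht
  have ht' : (0:ℝ) ≤ t := ht0.le
  set N := I0 l u₀ u₁ with hNdef
  have hNeq : N = HNorm l u₁ + HNorm (l + 1) u₀ + Norm11 u₁ + Norm11 u₀ := rfl
  have hH1n : 0 ≤ HNorm l u₁ := HNorm_nonneg _ _
  have hH0n : 0 ≤ HNorm (l + 1) u₀ := HNorm_nonneg _ _
  have h11a : 0 ≤ Norm11 u₁ := Norm11_nonneg _
  have h11b : 0 ≤ Norm11 u₀ := Norm11_nonneg _
  have hN0 : 0 ≤ N := by rw [hNeq]; linarith only [hH1n, hH0n, h11a, h11b]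
  have hb₀ : ∀ ξ, ‖ftr u₀ ξ‖ ≤ N := fun ξ =>
    (norm_ftr_le_norm11 u₀ hL0 ξ).trans (by rw [hNeq]; linarith only [hH1n, hH0n, h11a])
  have hb₁ : ∀ ξ, ‖ftr u₁ ξ‖ ≤ N := fun ξ =>
    (norm_ftr_le_norm11 u₁ hL1 ξ).trans (by rw [hNeq]; linarith only [hH1n, hH0n, h11b])
  set W₀ : Rn n → ℝ := fun ξ => (1 + ‖ξ‖ ^ 2) ^ (l + 1) * ‖ftr u₀ ξ‖ ^ 2 with hW₀def
  set W₁ : Rn n → ℝ := fun ξ => (1 + ‖ξ‖ ^ 2) ^ l * ‖ftr u₁ ξ‖ ^ 2 with hW₁def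
  have hIW₀ : Integrable W₀ := hH0
  have hIW₁ : Integrable W₁ := hH1
  set Q₀ := ∫ ξ, W₀ ξ with hQ₀def
  set Q₁ := ∫ ξ, W₁ ξ with hQ₁def
  have hW₀nn : ∀ ξ, 0 ≤ W₀ ξ := fun ξ => by
    simp only [hW₀def]; positivity
  have hW₁nn : ∀ ξ, 0 ≤ W₁ ξ := fun ξ => by
    simp only [hW₁def]; positivity
  have hQ₀0 : 0 ≤ Q₀ := integral_nonneg hW₀nn
  have hQ₁0 : 0 ≤ Q₁ := integral_nonneg hW₁nn
  have hQ₀N : Q₀ ≤ N ^ 2 := by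
    apply le_sq_of_rpow_half_le hQ₀0
    have heq : HNorm (l + 1) u₀ = Q₀ ^ ((1:ℝ)/2) := rfl
    rw [← heq, hNeq]; linarith only [hH1n, h11a, h11b]
  have hQ₁N : Q₁ ≤ N ^ 2 := by
    apply le_sq_of_rpow_half_le hQ₁0
    have heq : HNorm l u₁ = Q₁ ^ ((1:ℝ)/2) := rfl
    rw [← heq, hNeq]; linarith only [hH0n, h11a, h11b]
  have hwge₀ : ∀ ξ : Rn n, ‖ftr u₀ ξ‖ ^ 2 ≤ W₀ ξ := fun ξ => by
    simp only [hW₀def]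
    have h1 : (1:ℝ) ≤ (1 + ‖ξ‖ ^ 2) ^ (l + 1) :=
      Real.one_le_rpow (by linarith only [sq_nonneg ‖ξ‖]) (by linarith only [hl])
    exact le_mul_of_one_le_left (sq_nonneg _) h1
  have hwge₁ : ∀ ξ : Rn n, ‖ftr u₁ ξ‖ ^ 2 ≤ W₁ ξ := fun ξ => by
    simp only [hW₁def]
    have h1 : (1:ℝ) ≤ (1 + ‖ξ‖ ^ 2) ^ l :=
      Real.one_le_rpow (by linarith only [sq_nonneg ‖ξ‖]) (by linarith only [hl])
    exact le_mul_of_one_le_left (sq_nonneg _) h1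
  have hc₀ : Continuous (ftr u₀) := continuous_ftr u₀ hL0.1
  have hc₁ : Continuous (ftr u₁) := continuous_ftr u₁ hL1.1
  have hmu : Measurable fun ξ => uhat ζ u₀ u₁ t ξ := by
    unfold uhat uhatC
    apply Measurable.add
    · exact hc₀.measurable.mul (Complex.measurable_ofReal.comp (measurable_E0 ζ t))
    · apply Measurable.mul
      · apply Measurable.add hc₁.measurable
        apply hc₀.measurable.mul
        apply Complex.measurable_ofReal.comp
        fun_prop
      · exact Complex.measurable_ofReal.comp (measurable_E1 ζ t)
  set h : Rn n → ℝ := fun ξ => ‖uhat ζ u₀ u₁ t ξ‖ ^ 2 with hhdef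
  have hhm : Measurable h := hmu.norm.pow_const 2
  have hh0 : ∀ ξ, 0 ≤ h ξ := fun ξ => by simp only [hhdef]; positivity
  have hsq₀ : Integrable fun ξ : Rn n => ‖ftr u₀ ξ‖ ^ 2 := by
    refine hIW₀.mono ((hc₀.norm.pow 2).aestronglyMeasurable) ?_
    filter_upwards with ξ
    rw [Real.norm_eq_abs, abs_of_nonneg (by positivity), Real.norm_eq_abs,
      abs_of_nonneg (hW₀nn ξ)]
    exact hwge₀ ξ
  have hsq₁ : Integrable fun ξ : Rn n => ‖ftr u₁ ξ‖ ^ 2 := by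
    refine hIW₁.mono ((hc₁.norm.pow 2).aestronglyMeasurable) ?_
    filter_upwards with ξ
    rw [Real.norm_eq_abs, abs_of_nonneg (by positivity), Real.norm_eq_abs,
      abs_of_nonneg (hW₁nn ξ)]
    exact hwge₁ ξ
  have hhle : ∀ ξ, h ξ ≤ 2 * (1 + t) ^ 2 * (‖ftr u₀ ξ‖ ^ 2 + ‖ftr u₁ ξ‖ ^ 2) := by
    intro ξ
    have hu := uhat_norm_le ζ u₀ u₁ t ξ
    have b1 : ‖ftr u₀ ξ‖ * |E0 ζ t ξ| ≤ ‖ftr u₀ ξ‖ * 1 :=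
      mul_le_mul_of_nonneg_left (E0_abs_le_one hζ' ht' ξ) (norm_nonneg _)
    have b2 : (‖ftr u₁ ξ‖ + ‖ftr u₀ ξ‖ / 2) * |E1 ζ t ξ| ≤
        (‖ftr u₁ ξ‖ + ‖ftr u₀ ξ‖ / 2) * t :=
      mul_le_mul_of_nonneg_left (E1_abs_le_t hζ' ht' ξ) (by positivity)
    have hs : ‖uhat ζ u₀ u₁ t ξ‖ ≤ ‖ftr u₀ ξ‖ + (‖ftr u₁ ξ‖ + ‖ftr u₀ ξ‖ / 2) * t := by
      linarith only [hu, b1, b2]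
    have hs2 : ‖ftr u₀ ξ‖ + (‖ftr u₁ ξ‖ + ‖ftr u₀ ξ‖ / 2) * t ≤
        (1 + t) * (‖ftr u₀ ξ‖ + ‖ftr u₁ ξ‖) :=
      ineq_lin1 (norm_nonneg _) (norm_nonneg _) ht
    have hs3 := pow_le_pow_left₀ (norm_nonneg _) (hs.trans hs2) 2
    have hrfl9 : h ξ = ‖uhat ζ u₀ u₁ t ξ‖ ^ 2 := rfl
    rw [hrfl9]
    exact hs3.trans (ineq_sq1 _ _ _)
  have hIh : Integrable h := by
    refine ((hsq₀.add hsq₁).const_mul (2 * (1 + t) ^ 2)).mono'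
      hhm.aestronglyMeasurable ?_
    filter_upwards with ξ
    rw [Real.norm_eq_abs, abs_of_nonneg (hh0 ξ)]
    exact hhle ξ
  set SA : Set (Rn n) := {ξ | ‖ξ‖ ≤ ζ / 2} with hSAdef
  set SB : Set (Rn n) := {ξ | ζ / 2 < ‖ξ‖ ∧ ‖ξ‖ ≤ 1} with hSBdef
  set SC : Set (Rn n) := {ξ | 1 < ‖ξ‖} with hSCdef
  have hSA : MeasurableSet SA := measurableSet_le measurable_norm measurable_const
  have hSB : MeasurableSet SB := by
    have h1 : MeasurableSet {ξ : Rn n | ζ / 2 < ‖ξ‖} :=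
      measurableSet_lt measurable_const measurable_norm
    have h2 : MeasurableSet {ξ : Rn n | ‖ξ‖ ≤ 1} :=
      measurableSet_le measurable_norm measurable_const
    exact h1.inter h2
  have hSC : MeasurableSet SC := measurableSet_lt measurable_const measurable_norm
  have hsplit : ∫ ξ, h ξ = (∫ ξ in SA, h ξ) + ((∫ ξ in SB, h ξ) + (∫ ξ in SC, h ξ)) := by
    have h1 := integral_add_compl hSA hIh
    have h2 : SAᶜ = SB ∪ SC := by
      ext ξ
      simp only [hSAdef, hSBdef, hSCdef, Set.mem_compl_iff, Set.mem_setOf_eq,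
        Set.mem_union, not_le]
      constructor
      · intro hr
        rcases le_or_gt ‖ξ‖ 1 with hle | hlt
        · exact Or.inl ⟨hr, hle⟩
        · exact Or.inr hlt
      · rintro (⟨h3, _⟩ | h3)
        · exact h3
        · have hh : ζ / 2 < 1 := by linarith only [hζ0, hζ1]
          linarith only [hh, h3]
    have h3 : ∫ ξ in SB ∪ SC, h ξ = (∫ ξ in SB, h ξ) + (∫ ξ in SC, h ξ) := by
      apply setIntegral_union ?_ hSC hIh.integrableOn hIh.integrableOn
      rw [Set.disjoint_left]
      rintro ξ ⟨_, hle⟩ hgt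
      exact absurd hgt (not_lt.2 hle)
    rw [← h1, h2, h3]
  have hgaussInt : Integrable fun ξ : Rn n => Real.exp (-(2 * t) * ‖ξ‖ ^ 2) :=
    gauss_integrable (2 * t) (by positivity)
  -- Region A
  have hA : (∫ ξ in SA, h ξ) ≤
      (49 * Real.pi ^ ((n : ℝ) / 2)) * (N ^ 2 * t ^ (-((n : ℝ) / 2))) := by
    have hpt : ∀ ξ ∈ SA, h ξ ≤ 49 * N ^ 2 * Real.exp (-(2 * t) * ‖ξ‖ ^ 2) := by
      intro ξ hξ
      have hxA : ‖ξ‖ ≤ ζ / 2 := hξ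
      have hE0 := E0_low hζ' ht' (not_lt.2 (hxA.trans (by linarith only [hζ0])))
      have hE1 := E1_low_bounded hζ' ht' hxA
      have hmono : Real.exp (-(t * (‖ξ‖ ^ 2 * (1 + ‖ξ‖ ^ 2)))) ≤
          Real.exp (-t * ‖ξ‖ ^ 2) := by
        exact Real.exp_le_exp.2 (ineq_mono ht')
      have b0 : ‖ftr u₀ ξ‖ * |E0 ζ t ξ| ≤ N * Real.exp (-t * ‖ξ‖ ^ 2) :=
        mul_le_mul (hb₀ ξ) (hE0.trans hmono) (abs_nonneg _) hN0
      have b1 : (‖ftr u₁ ξ‖ + ‖ftr u₀ ξ‖ / 2) * |E1 ζ t ξ| ≤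
          (N + N / 2) * (4 * Real.exp (-t * ‖ξ‖ ^ 2)) := by
        apply mul_le_mul ?_ ?_ (abs_nonneg _) (by linarith only [hN0])
        · linarith only [hb₀ ξ, hb₁ ξ]
        · refine hE1.trans ?_
          linarith only [hmono]
      have hs : ‖uhat ζ u₀ u₁ t ξ‖ ≤ 7 * N * Real.exp (-t * ‖ξ‖ ^ 2) := by
        have hu := uhat_norm_le ζ u₀ u₁ t ξ
        linarith only [hu, b0, b1]
      have hsq := pow_le_pow_left₀ (norm_nonneg _) hs 2
      have hexp2 : Real.exp (-t * ‖ξ‖ ^ 2) ^ 2 = Real.exp (-(2 * t) * ‖ξ‖ ^ 2) := by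
        rw [sq, ← Real.exp_add]; ring_nf
      have hrfl : h ξ = ‖uhat ζ u₀ u₁ t ξ‖ ^ 2 := rfl
      calc h ξ ≤ (7 * N * Real.exp (-t * ‖ξ‖ ^ 2)) ^ 2 := by rw [hrfl]; exact hsq
        _ = 49 * N ^ 2 * Real.exp (-(2 * t) * ‖ξ‖ ^ 2) := by
            rw [mul_pow, mul_pow, hexp2]; ring
    calc (∫ ξ in SA, h ξ)
        ≤ ∫ ξ in SA, 49 * N ^ 2 * Real.exp (-(2 * t) * ‖ξ‖ ^ 2) :=
          setIntegral_mono_on hIh.integrableOn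
            ((hgaussInt.const_mul _).integrableOn) hSA hpt
      _ ≤ ∫ ξ, 49 * N ^ 2 * Real.exp (-(2 * t) * ‖ξ‖ ^ 2) :=
          setIntegral_le_integral (hgaussInt.const_mul _)
            (Filter.Eventually.of_forall fun ξ => by positivity)
      _ = 49 * N ^ 2 * (Real.pi / (2 * t)) ^ ((n : ℝ) / 2) := by
          rw [integral_const_mul, gauss_integral (2 * t) (by positivity)]
      _ ≤ (49 * Real.pi ^ ((n : ℝ) / 2)) * (N ^ 2 * t ^ (-((n : ℝ) / 2))) := by
          have key := pi_div_rpow_le ht ((n : ℝ) / 2) (by positivity)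
          have hpow : (0:ℝ) ≤ (Real.pi / (2 * t)) ^ ((n : ℝ) / 2) :=
            Real.rpow_nonneg (by positivity) _
          have hq := mul_le_mul_of_nonneg_left key
            (by positivity : (0:ℝ) ≤ 49 * N ^ 2)
          calc 49 * N ^ 2 * (Real.pi / (2 * t)) ^ ((n : ℝ) / 2)
              ≤ 49 * N ^ 2 * (Real.pi ^ ((n : ℝ) / 2) * t ^ (-((n : ℝ) / 2))) := hq
            _ = (49 * Real.pi ^ ((n : ℝ) / 2)) * (N ^ 2 * t ^ (-((n : ℝ) / 2))) := by ring
  -- Region B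
  have hB : (∫ ξ in SB, h ξ) ≤ (10 * M₂) * (N ^ 2 * t ^ (-((n : ℝ) / 2))) := by
    have hc20 : (0:ℝ) ≤ 5 * (t ^ 2 * Real.exp (-(ζ ^ 2 / 2 * t))) := by positivity
    have hpt : ∀ ξ ∈ SB, h ξ ≤ 5 * (t ^ 2 * Real.exp (-(ζ ^ 2 / 2 * t))) *
        (‖ftr u₀ ξ‖ ^ 2 + ‖ftr u₁ ξ‖ ^ 2) := by
      intro ξ hξ
      obtain ⟨hξ1, hξ2⟩ := hξ
      have hE0B : |E0 ζ t ξ| ≤ Real.exp (-(ζ ^ 2 / 4 * t)) := by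
        rcases lt_or_ge ζ ‖ξ‖ with hgt | hle
        · exact (E0_high hgt).trans (Real.exp_le_exp.2 (Bexp_high hζ0 hζ1 ht' (norm_nonneg ξ) hξ2))
        · exact (E0_low hζ' ht' (not_lt.2 hle)).trans
            (Real.exp_le_exp.2 (Bexp_low hζ0 ht' hξ1 (norm_nonneg ξ)))
      have hE1B : |E1 ζ t ξ| ≤ t * Real.exp (-(ζ ^ 2 / 4 * t)) := by
        rcases lt_or_ge ζ ‖ξ‖ with hgt | hle
        · exact (E1_high_t ht' hgt).trans (mul_le_mul_of_nonneg_left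
            (Real.exp_le_exp.2 (Bexp_high hζ0 hζ1 ht' (norm_nonneg ξ) hξ2)) ht')
        · exact (E1_low_t hζ' ht' (not_lt.2 hle)).trans (mul_le_mul_of_nonneg_left
            (Real.exp_le_exp.2 (Bexp_low hζ0 ht' hξ1 (norm_nonneg ξ))) ht')
      have hu := uhat_norm_le ζ u₀ u₁ t ξ
      have hE : (0:ℝ) < Real.exp (-(ζ ^ 2 / 4 * t)) := Real.exp_pos _
      have b0 : ‖ftr u₀ ξ‖ * |E0 ζ t ξ| ≤ ‖ftr u₀ ξ‖ * Real.exp (-(ζ ^ 2 / 4 * t)) :=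
        mul_le_mul_of_nonneg_left hE0B (norm_nonneg _)
      have b1 : (‖ftr u₁ ξ‖ + ‖ftr u₀ ξ‖ / 2) * |E1 ζ t ξ| ≤
          (‖ftr u₁ ξ‖ + ‖ftr u₀ ξ‖ / 2) * (t * Real.exp (-(ζ ^ 2 / 4 * t))) :=
        mul_le_mul_of_nonneg_left hE1B (by positivity)
      have hs : ‖uhat ζ u₀ u₁ t ξ‖ ≤
          (3 / 2 * ‖ftr u₀ ξ‖ + ‖ftr u₁ ξ‖) * (t * Real.exp (-(ζ ^ 2 / 4 * t))) :=
        ineq_B (norm_nonneg _) hE ht (by linarith only [hu, b0, b1])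
      have hsq := pow_le_pow_left₀ (norm_nonneg _) hs 2
      have he2 : Real.exp (-(ζ ^ 2 / 4 * t)) ^ 2 = Real.exp (-(ζ ^ 2 / 2 * t)) := by
        rw [sq, ← Real.exp_add]; ring_nf
      have h5 : (3 / 2 * ‖ftr u₀ ξ‖ + ‖ftr u₁ ξ‖) ^ 2 ≤
          5 * (‖ftr u₀ ξ‖ ^ 2 + ‖ftr u₁ ξ‖ ^ 2) := ineq_sq2 _ _
      have hrfl : h ξ = ‖uhat ζ u₀ u₁ t ξ‖ ^ 2 := rfl
      rw [hrfl]
      calc ‖uhat ζ u₀ u₁ t ξ‖ ^ 2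
          ≤ ((3 / 2 * ‖ftr u₀ ξ‖ + ‖ftr u₁ ξ‖) * (t * Real.exp (-(ζ ^ 2 / 4 * t)))) ^ 2 := hsq
        _ = (3 / 2 * ‖ftr u₀ ξ‖ + ‖ftr u₁ ξ‖) ^ 2 *
            (t ^ 2 * Real.exp (-(ζ ^ 2 / 2 * t))) := by
            rw [mul_pow, mul_pow, he2]
        _ ≤ 5 * (‖ftr u₀ ξ‖ ^ 2 + ‖ftr u₁ ξ‖ ^ 2) *
            (t ^ 2 * Real.exp (-(ζ ^ 2 / 2 * t))) :=
            mul_le_mul_of_nonneg_right h5 (by positivity)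
        _ = 5 * (t ^ 2 * Real.exp (-(ζ ^ 2 / 2 * t))) *
            (‖ftr u₀ ξ‖ ^ 2 + ‖ftr u₁ ξ‖ ^ 2) := by ring
    have hIb : Integrable fun ξ : Rn n => 5 * (t ^ 2 * Real.exp (-(ζ ^ 2 / 2 * t))) *
        (‖ftr u₀ ξ‖ ^ 2 + ‖ftr u₁ ξ‖ ^ 2) := (hsq₀.add hsq₁).const_mul _
    have hc2le : 5 * (t ^ 2 * Real.exp (-(ζ ^ 2 / 2 * t))) ≤
        5 * (M₂ * t ^ (-((n : ℝ) / 2))) := by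
      have happ := hM₂ t ht'
      have hsplit2 : t ^ (2:ℕ) = t ^ ((n : ℝ) / 2 + 2) * t ^ (-((n : ℝ) / 2)) := by
        rw [← Real.rpow_natCast t 2, ← Real.rpow_add ht0]
        norm_num
      have hp : (0:ℝ) ≤ t ^ (-((n : ℝ) / 2)) := Real.rpow_nonneg ht' _
      have := mul_le_mul_of_nonneg_right happ hp
      calc 5 * (t ^ 2 * Real.exp (-(ζ ^ 2 / 2 * t)))
          = 5 * ((t ^ ((n : ℝ) / 2 + 2) * Real.exp (-(ζ ^ 2 / 2 * t))) *
            t ^ (-((n : ℝ) / 2))) := by rw [hsplit2]; ring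
        _ ≤ 5 * (M₂ * t ^ (-((n : ℝ) / 2))) := by linarith only [this]
    calc (∫ ξ in SB, h ξ)
        ≤ ∫ ξ in SB, 5 * (t ^ 2 * Real.exp (-(ζ ^ 2 / 2 * t))) *
            (‖ftr u₀ ξ‖ ^ 2 + ‖ftr u₁ ξ‖ ^ 2) :=
          setIntegral_mono_on hIh.integrableOn hIb.integrableOn hSB hpt
      _ ≤ ∫ ξ, 5 * (t ^ 2 * Real.exp (-(ζ ^ 2 / 2 * t))) *
            (‖ftr u₀ ξ‖ ^ 2 + ‖ftr u₁ ξ‖ ^ 2) :=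
          setIntegral_le_integral hIb (Filter.Eventually.of_forall fun ξ => by positivity)
      _ = 5 * (t ^ 2 * Real.exp (-(ζ ^ 2 / 2 * t))) *
            ((∫ ξ, ‖ftr u₀ ξ‖ ^ 2) + ∫ ξ, ‖ftr u₁ ξ‖ ^ 2) := by
          rw [integral_const_mul, integral_add hsq₀ hsq₁]
      _ ≤ 5 * (M₂ * t ^ (-((n : ℝ) / 2))) * (2 * N ^ 2) := by
          have i0 : (∫ ξ, ‖ftr u₀ ξ‖ ^ 2) ≤ Q₀ := integral_mono hsq₀ hIW₀ hwge₀
          have i1 : (∫ ξ, ‖ftr u₁ ξ‖ ^ 2) ≤ Q₁ := integral_mono hsq₁ hIW₁ hwge₁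
          have isum : (∫ ξ, ‖ftr u₀ ξ‖ ^ 2) + (∫ ξ, ‖ftr u₁ ξ‖ ^ 2) ≤ 2 * N ^ 2 := by
            linarith only [i0, i1, hQ₀N, hQ₁N]
          have inn : (0:ℝ) ≤ (∫ ξ, ‖ftr u₀ ξ‖ ^ 2) + ∫ ξ, ‖ftr u₁ ξ‖ ^ 2 := by
            have j0 : (0:ℝ) ≤ ∫ ξ, ‖ftr u₀ ξ‖ ^ 2 := integral_nonneg fun ξ => by positivity
            have j1 : (0:ℝ) ≤ ∫ ξ, ‖ftr u₁ ξ‖ ^ 2 := integral_nonneg fun ξ => by positivity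
            linarith only [j0, j1]
          exact mul_le_mul hc2le isum inn (by positivity)
      _ = (10 * M₂) * (N ^ 2 * t ^ (-((n : ℝ) / 2))) := by ring
  -- Region C
  have hC : (∫ ξ in SC, h ξ) ≤ (24 * M₃) * (N ^ 2 * t ^ (-((n : ℝ) / 2))) := by
    have hTll : t ^ (-(l + 1)) ≤ t ^ (-((n : ℝ) / 2)) :=
      Real.rpow_le_rpow_of_exponent_le ht (by linarith)
    have hT0 : (0:ℝ) ≤ t ^ (-(l + 1)) := Real.rpow_nonneg ht' _
    have hpt : ∀ ξ ∈ SC, h ξ ≤ (8 * M₃ * t ^ (-(l + 1))) * W₀ ξ +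
        (16 * M₃ * t ^ (-(l + 1))) * W₁ ξ := by
      intro ξ hξ
      have hr1 : 1 < ‖ξ‖ := hξ
      have hr0 : (0:ℝ) ≤ ‖ξ‖ := norm_nonneg ξ
      have ha0 : (0:ℝ) < 1 + ‖ξ‖ ^ 2 := by positivity
      have hgt : ζ < ‖ξ‖ := lt_trans hζ1 hr1
      have hE0 := E0_high (t := t) hgt
      have hE1 := E1_high_r hζ1 t hr1
      have hE : (0:ℝ) < Real.exp (-t / (2 * (1 + ‖ξ‖ ^ 2))) := Real.exp_pos _
      have hu := uhat_norm_le ζ u₀ u₁ t ξ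
      have hb0 : ‖ftr u₀ ξ‖ * |E0 ζ t ξ| ≤
          ‖ftr u₀ ξ‖ * Real.exp (-t / (2 * (1 + ‖ξ‖ ^ 2))) :=
        mul_le_mul_of_nonneg_left hE0 (norm_nonneg _)
      have hb1 : (‖ftr u₁ ξ‖ + ‖ftr u₀ ξ‖ / 2) * |E1 ζ t ξ| ≤
          (‖ftr u₁ ξ‖ + ‖ftr u₀ ξ‖ / 2) *
            ((2 / ‖ξ‖) * Real.exp (-t / (2 * (1 + ‖ξ‖ ^ 2)))) :=
        mul_le_mul_of_nonneg_left hE1 (by positivity)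
      have hrpos : (0:ℝ) < ‖ξ‖ := by linarith only [hr1]
      have hrinv : 1 / ‖ξ‖ ≤ 1 := by rw [div_le_one hrpos]; linarith only [hr1]
      have hs : ‖uhat ζ u₀ u₁ t ξ‖ ≤
          (2 * ‖ftr u₀ ξ‖ + (2 / ‖ξ‖) * ‖ftr u₁ ξ‖) *
            Real.exp (-t / (2 * (1 + ‖ξ‖ ^ 2))) :=
        ineq_C hr1 (norm_nonneg _) (norm_nonneg _) hE (by linarith only [hu, hb0, hb1])
      have hsq := pow_le_pow_left₀ (norm_nonneg _) hs 2
      have he2 : Real.exp (-t / (2 * (1 + ‖ξ‖ ^ 2))) ^ 2 =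
          Real.exp (-(t / (1 + ‖ξ‖ ^ 2))) := by
        have harg : -t / (2 * (1 + ‖ξ‖ ^ 2)) + -t / (2 * (1 + ‖ξ‖ ^ 2)) =
            -(t / (1 + ‖ξ‖ ^ 2)) := by
          rw [← add_div, show -t + -t = -(2 * t) by ring]
          have hane : (1 + ‖ξ‖ ^ 2) ≠ 0 := by positivity
          field_simp
        rw [sq, ← Real.exp_add, harg]
      have hkey : Real.exp (-(t / (1 + ‖ξ‖ ^ 2))) ≤
          M₃ * t ^ (-(l + 1)) * (1 + ‖ξ‖ ^ 2) ^ (l + 1) := by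
        have happ := hM₃ (t / (1 + ‖ξ‖ ^ 2)) (by positivity)
        rw [one_mul] at happ
        rw [Real.div_rpow ht' ha0.le] at happ
        have hta : (0:ℝ) < t ^ (l + 1) := Real.rpow_pos_of_pos ht0 _
        have haa : (0:ℝ) < (1 + ‖ξ‖ ^ 2) ^ (l + 1) := Real.rpow_pos_of_pos ha0 _
        rw [div_mul_eq_mul_div, div_le_iff₀ haa] at happ
        rw [Real.rpow_neg ht',
          show M₃ * (t ^ (l + 1))⁻¹ * (1 + ‖ξ‖ ^ 2) ^ (l + 1) =
            (M₃ * (1 + ‖ξ‖ ^ 2) ^ (l + 1)) / t ^ (l + 1) by ring,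
          le_div_iff₀ hta]
        linarith only [happ]
      have hstep : h ξ ≤ (8 * ‖ftr u₀ ξ‖ ^ 2 + 8 * (‖ftr u₁ ξ‖ / ‖ξ‖) ^ 2) *
          Real.exp (-(t / (1 + ‖ξ‖ ^ 2))) := by
        have hrfl : h ξ = ‖uhat ζ u₀ u₁ t ξ‖ ^ 2 := rfl
        rw [hrfl]
        calc ‖uhat ζ u₀ u₁ t ξ‖ ^ 2
            ≤ ((2 * ‖ftr u₀ ξ‖ + (2 / ‖ξ‖) * ‖ftr u₁ ξ‖) *
              Real.exp (-t / (2 * (1 + ‖ξ‖ ^ 2)))) ^ 2 := hsq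
          _ = (2 * ‖ftr u₀ ξ‖ + (2 / ‖ξ‖) * ‖ftr u₁ ξ‖) ^ 2 *
              Real.exp (-(t / (1 + ‖ξ‖ ^ 2))) := by rw [mul_pow, he2]
          _ ≤ (8 * ‖ftr u₀ ξ‖ ^ 2 + 8 * (‖ftr u₁ ξ‖ / ‖ξ‖) ^ 2) *
              Real.exp (-(t / (1 + ‖ξ‖ ^ 2))) := by
              apply mul_le_mul_of_nonneg_right _ (Real.exp_pos _).le
              have hexpand : (2 / ‖ξ‖) * ‖ftr u₁ ξ‖ = 2 * (‖ftr u₁ ξ‖ / ‖ξ‖) := by ring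
              rw [hexpand]
              exact ineq_sq3 _ _
      have hterm1 : 8 * ‖ftr u₀ ξ‖ ^ 2 * Real.exp (-(t / (1 + ‖ξ‖ ^ 2))) ≤
          (8 * M₃ * t ^ (-(l + 1))) * W₀ ξ := by
        have h3 := mul_le_mul_of_nonneg_left hkey
          (by positivity : (0:ℝ) ≤ 8 * ‖ftr u₀ ξ‖ ^ 2)
        simp only [hW₀def]
        calc 8 * ‖ftr u₀ ξ‖ ^ 2 * Real.exp (-(t / (1 + ‖ξ‖ ^ 2)))
            ≤ 8 * ‖ftr u₀ ξ‖ ^ 2 * (M₃ * t ^ (-(l + 1)) * (1 + ‖ξ‖ ^ 2) ^ (l + 1)) := h3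
          _ = (8 * M₃ * t ^ (-(l + 1))) * ((1 + ‖ξ‖ ^ 2) ^ (l + 1) * ‖ftr u₀ ξ‖ ^ 2) := by
              ring
      have hterm2 : 8 * (‖ftr u₁ ξ‖ / ‖ξ‖) ^ 2 * Real.exp (-(t / (1 + ‖ξ‖ ^ 2))) ≤
          (16 * M₃ * t ^ (-(l + 1))) * W₁ ξ := by
        have h1 : 8 * (‖ftr u₁ ξ‖ / ‖ξ‖) ^ 2 ≤ 16 * (‖ftr u₁ ξ‖ ^ 2 / (1 + ‖ξ‖ ^ 2)) := by
          rw [div_pow, show (8:ℝ) * (‖ftr u₁ ξ‖ ^ 2 / ‖ξ‖ ^ 2) =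
              (8 * ‖ftr u₁ ξ‖ ^ 2) / ‖ξ‖ ^ 2 by ring,
            show (16:ℝ) * (‖ftr u₁ ξ‖ ^ 2 / (1 + ‖ξ‖ ^ 2)) =
              (16 * ‖ftr u₁ ξ‖ ^ 2) / (1 + ‖ξ‖ ^ 2) by ring,
            div_le_div_iff₀ (by positivity) ha0]
          exact ineq_r2 (by nlinarith only [hr1, hr0])
        have h2 : 16 * (‖ftr u₁ ξ‖ ^ 2 / (1 + ‖ξ‖ ^ 2)) * Real.exp (-(t / (1 + ‖ξ‖ ^ 2)))
            ≤ (16 * M₃ * t ^ (-(l + 1))) * ((1 + ‖ξ‖ ^ 2) ^ l * ‖ftr u₁ ξ‖ ^ 2) := by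
          have h3 := mul_le_mul_of_nonneg_left hkey
            (by positivity : (0:ℝ) ≤ 16 * (‖ftr u₁ ξ‖ ^ 2 / (1 + ‖ξ‖ ^ 2)))
          have h4 : (1 + ‖ξ‖ ^ 2) ^ (l + 1) = (1 + ‖ξ‖ ^ 2) ^ l * (1 + ‖ξ‖ ^ 2) :=
            Real.rpow_add_one (ne_of_gt ha0) l
          calc 16 * (‖ftr u₁ ξ‖ ^ 2 / (1 + ‖ξ‖ ^ 2)) * Real.exp (-(t / (1 + ‖ξ‖ ^ 2)))
              ≤ 16 * (‖ftr u₁ ξ‖ ^ 2 / (1 + ‖ξ‖ ^ 2)) *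
                (M₃ * t ^ (-(l + 1)) * (1 + ‖ξ‖ ^ 2) ^ (l + 1)) := h3
            _ = (16 * M₃ * t ^ (-(l + 1))) * ((1 + ‖ξ‖ ^ 2) ^ l * ‖ftr u₁ ξ‖ ^ 2) := by
                rw [h4]
                field_simp
        simp only [hW₁def]
        calc 8 * (‖ftr u₁ ξ‖ / ‖ξ‖) ^ 2 * Real.exp (-(t / (1 + ‖ξ‖ ^ 2)))
            ≤ 16 * (‖ftr u₁ ξ‖ ^ 2 / (1 + ‖ξ‖ ^ 2)) * Real.exp (-(t / (1 + ‖ξ‖ ^ 2))) :=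
              mul_le_mul_of_nonneg_right h1 (Real.exp_pos _).le
          _ ≤ (16 * M₃ * t ^ (-(l + 1))) * ((1 + ‖ξ‖ ^ 2) ^ l * ‖ftr u₁ ξ‖ ^ 2) := h2
      calc h ξ ≤ (8 * ‖ftr u₀ ξ‖ ^ 2 + 8 * (‖ftr u₁ ξ‖ / ‖ξ‖) ^ 2) *
            Real.exp (-(t / (1 + ‖ξ‖ ^ 2))) := hstep
        _ = 8 * ‖ftr u₀ ξ‖ ^ 2 * Real.exp (-(t / (1 + ‖ξ‖ ^ 2))) +
            8 * (‖ftr u₁ ξ‖ / ‖ξ‖) ^ 2 * Real.exp (-(t / (1 + ‖ξ‖ ^ 2))) := by ring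
        _ ≤ _ := add_le_add hterm1 hterm2
    have hIc : Integrable fun ξ : Rn n => (8 * M₃ * t ^ (-(l + 1))) * W₀ ξ +
        (16 * M₃ * t ^ (-(l + 1))) * W₁ ξ := (hIW₀.const_mul _).add (hIW₁.const_mul _)
    calc (∫ ξ in SC, h ξ)
        ≤ ∫ ξ in SC, ((8 * M₃ * t ^ (-(l + 1))) * W₀ ξ +
            (16 * M₃ * t ^ (-(l + 1))) * W₁ ξ) :=
          setIntegral_mono_on hIh.integrableOn hIc.integrableOn hSC hpt
      _ ≤ ∫ ξ, ((8 * M₃ * t ^ (-(l + 1))) * W₀ ξ + (16 * M₃ * t ^ (-(l + 1))) * W₁ ξ) :=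
          setIntegral_le_integral hIc (Filter.Eventually.of_forall fun ξ => by
            have := hW₀nn ξ
            have := hW₁nn ξ
            positivity)
      _ = (8 * M₃ * t ^ (-(l + 1))) * Q₀ + (16 * M₃ * t ^ (-(l + 1))) * Q₁ := by
          rw [integral_add (hIW₀.const_mul _) (hIW₁.const_mul _), integral_const_mul,
            integral_const_mul]
      _ ≤ (24 * M₃) * (N ^ 2 * t ^ (-((n : ℝ) / 2))) := by
          have c0 : (8 * M₃ * t ^ (-(l + 1))) * Q₀ ≤
              (8 * M₃) * (N ^ 2 * t ^ (-(l + 1))) := by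
            calc (8 * M₃ * t ^ (-(l + 1))) * Q₀ ≤ (8 * M₃ * t ^ (-(l + 1))) * N ^ 2 :=
                  mul_le_mul_of_nonneg_left hQ₀N (by positivity)
              _ = (8 * M₃) * (N ^ 2 * t ^ (-(l + 1))) := by ring
          have c1 : (16 * M₃ * t ^ (-(l + 1))) * Q₁ ≤
              (16 * M₃) * (N ^ 2 * t ^ (-(l + 1))) := by
            calc (16 * M₃ * t ^ (-(l + 1))) * Q₁ ≤ (16 * M₃ * t ^ (-(l + 1))) * N ^ 2 :=
                  mul_le_mul_of_nonneg_left hQ₁N (by positivity)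
              _ = (16 * M₃) * (N ^ 2 * t ^ (-(l + 1))) := by ring
          have c2 : (24 * M₃) * (N ^ 2 * t ^ (-(l + 1))) ≤
              (24 * M₃) * (N ^ 2 * t ^ (-((n : ℝ) / 2))) :=
            mul_le_mul_of_nonneg_left (mul_le_mul_of_nonneg_left hTll (sq_nonneg N))
              (by positivity)
          linarith only [c0, c1, c2]
  -- combine
  have hfinal : ∫ ξ, h ξ ≤ Ctot * (N ^ 2 * t ^ (-((n : ℝ) / 2))) := by
    rw [hsplit, hCtotdef]
    refine le_trans (add_le_add hA (add_le_add hB hC)) (le_of_eq (by ring))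
  have hK0 : (0:ℝ) ≤ Real.sqrt Ctot * N * t ^ (-((n : ℝ) / 4)) :=
    mul_nonneg (mul_nonneg (Real.sqrt_nonneg _) hN0) (Real.rpow_nonneg ht' _)
  have hKsq : (Real.sqrt Ctot * N * t ^ (-((n : ℝ) / 4))) ^ 2 =
      Ctot * (N ^ 2 * t ^ (-((n : ℝ) / 2))) := by
    have h1 : (t ^ (-((n : ℝ) / 4))) ^ (2:ℕ) = t ^ (-((n : ℝ) / 2)) := by
      rw [← Real.rpow_natCast (t ^ (-((n : ℝ) / 4))) 2, ← Real.rpow_mul ht']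
      congr 1
      push_cast
      ring
    have h2 : (Real.sqrt Ctot) ^ 2 = Ctot := Real.sq_sqrt hCtot0.le
    calc (Real.sqrt Ctot * N * t ^ (-((n : ℝ) / 4))) ^ 2
        = (Real.sqrt Ctot) ^ 2 * N ^ 2 * (t ^ (-((n : ℝ) / 4))) ^ (2:ℕ) := by ring
      _ = Ctot * (N ^ 2 * t ^ (-((n : ℝ) / 2))) := by rw [h1, h2]; ring
  have hgoal : (∫ ξ, h ξ) ^ ((1:ℝ)/2) ≤ Real.sqrt Ctot * N * t ^ (-((n : ℝ) / 4)) := by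
    apply rpow_half_le (integral_nonneg hh0) hK0
    rw [hKsq]
    exact hfinal
  exact hgoal
end
end

section
/- Let n ≥ 1 be an integer, l ≥ 0 a real number, and u₁ ∈ H^{l}(ℝⁿ). Then there exists a constant C > 0, depending only on n and l, such that for all t ≥ 0, ∫_{|ξ| ≥ 1} | û₁(ξ)·( e^{−t/(2(1+|ξ|²))} − e^{−t/(2|ξ|²)} )·sin(t|ξ|)/|ξ| |² dξ ≤ C·‖u₁‖²_{H^l}·(1+t)^{−l−3}. -/
open MeasureTheory Real Set

noncomputable section

open DampedPlate


lemma aux_pow_exp (N : ℕ) (hN : 1 ≤ N) (s : ℝ) (hs : 0 ≤ s) :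
    (1 + s) ^ N * Real.exp (-s) ≤ (N : ℝ) ^ N := by
  have hNpos : (0:ℝ) < N := by exact_mod_cast hN
  have h1 : 1 + s ≤ N * Real.exp (s / N) := by
    have h2 : 1 + s / N ≤ Real.exp (s / N) := by
      have := Real.add_one_le_exp (s / N); linarith
    have h3 : (N:ℝ) * (1 + s / N) = N + s := by field_simp
    have h4 := mul_le_mul_of_nonneg_left h2 hNpos.le
    have hN1 : (1:ℝ) ≤ N := by exact_mod_cast hN
    linarith
  have h4 : (1 + s) ^ N ≤ ((N:ℝ) * Real.exp (s / N)) ^ N :=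
    pow_le_pow_left₀ (by linarith) h1 N
  have h5 : ((N:ℝ) * Real.exp (s / N)) ^ N = (N:ℝ) ^ N * Real.exp s := by
    rw [mul_pow, ← Real.exp_nat_mul]
    congr 1
    field_simp
  calc (1 + s) ^ N * Real.exp (-s) ≤ ((N:ℝ) ^ N * Real.exp s) * Real.exp (-s) := by
        rw [← h5]; exact mul_le_mul_of_nonneg_right h4 (Real.exp_pos _).le
    _ = (N:ℝ) ^ N := by rw [mul_assoc, ← Real.exp_add]; simp

set_option maxHeartbeats 1000000 in
lemma aux_pointwise (l : ℝ) (hl : 0 ≤ l) (N : ℕ) (hN1 : 1 ≤ N) (hN : l + 5 ≤ N)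
    (t r : ℝ) (ht : 0 ≤ t) (hr : 1 ≤ r) :
    ((Real.exp (-t / (2 * (1 + r ^ 2))) - Real.exp (-t / (2 * r ^ 2))) *
        (Real.sin (t * r) / r)) ^ 2 ≤
      2 * (N:ℝ) ^ N * (1 + r ^ 2) ^ l * (1 + t) ^ (-l - 3) := by
  have hr0 : (0:ℝ) < r := by linarith
  have hr2 : (1:ℝ) ≤ r ^ 2 := by nlinarith
  set a : ℝ := 1 + r ^ 2 with ha_def
  have ha2 : (2:ℝ) ≤ a := by simp [ha_def]; linarith
  have ha0 : (0:ℝ) < a := by linarith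
  have hra : a ≤ 2 * r ^ 2 := by simp [ha_def]; linarith
  set s : ℝ := t / a with hs_def
  have hs : 0 ≤ s := div_nonneg ht ha0.le
  have hts : t = s * a := by rw [hs_def, div_mul_cancel₀ t ha0.ne']
  -- bound on the difference of exponentials
  have hD0 : 0 ≤ Real.exp (-t / (2 * a)) - Real.exp (-t / (2 * r ^ 2)) := by
    have : -t / (2 * r ^ 2) ≤ -t / (2 * a) := by
      rw [neg_div, neg_div, neg_le_neg_iff]
      exact div_le_div_of_nonneg_left ht (by positivity) (by linarith)
    have := Real.exp_le_exp.mpr this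
    linarith
  have hD : Real.exp (-t / (2 * a)) - Real.exp (-t / (2 * r ^ 2)) ≤
      Real.exp (-t / (2 * a)) * (t / (2 * r ^ 2 * a)) := by
    have h1 : Real.exp (-t / (2 * r ^ 2)) =
        Real.exp (-t / (2 * a)) * Real.exp (-(t / (2 * r ^ 2 * a))) := by
      rw [← Real.exp_add]; congr 1; field_simp; ring
    have h2 : 1 - Real.exp (-(t / (2 * r ^ 2 * a))) ≤ t / (2 * r ^ 2 * a) := by
      have := Real.add_one_le_exp (-(t / (2 * r ^ 2 * a))); linarith
    have hE := (Real.exp_pos (-t / (2 * a))).le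
    calc Real.exp (-t / (2 * a)) - Real.exp (-t / (2 * r ^ 2))
        = Real.exp (-t / (2 * a)) * (1 - Real.exp (-(t / (2 * r ^ 2 * a)))) := by
          rw [h1]; ring
      _ ≤ Real.exp (-t / (2 * a)) * (t / (2 * r ^ 2 * a)) :=
          mul_le_mul_of_nonneg_left h2 hE
  have hsin : |Real.sin (t * r) / r| ≤ 1 / r := by
    rw [abs_div, abs_of_pos hr0]
    gcongr
    exact Real.abs_sin_le_one _
  -- square everything
  have hsq : ((Real.exp (-t / (2 * a)) - Real.exp (-t / (2 * r ^ 2))) *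
        (Real.sin (t * r) / r)) ^ 2 ≤
      Real.exp (-s) * s ^ 2 * 2 / a ^ 3 := by
    have e1 : (Real.exp (-t / (2 * a)) - Real.exp (-t / (2 * r ^ 2))) ^ 2 ≤
        (Real.exp (-t / (2 * a)) * (t / (2 * r ^ 2 * a))) ^ 2 :=
      pow_le_pow_left₀ hD0 hD 2
    have e2 : (Real.sin (t * r) / r) ^ 2 ≤ (1 / r) ^ 2 := by
      rw [← sq_abs]
      exact pow_le_pow_left₀ (abs_nonneg _) hsin 2
    have e3 : (Real.exp (-t / (2 * a))) ^ 2 = Real.exp (-s) := by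
      rw [← Real.exp_nat_mul]
      congr 1
      field_simp [hs_def]
      rw [hts]; ring
    have p2 : r ^ 2 ≤ r ^ 6 := pow_le_pow_right₀ hr (by norm_num)
    have p4 : r ^ 4 ≤ r ^ 6 := pow_le_pow_right₀ hr (by norm_num)
    have p0 : (1:ℝ) ≤ r ^ 6 := one_le_pow₀ hr
    have e4 : a ^ 3 ≤ 8 * r ^ 6 := by
      have hexp : a ^ 3 = 1 + 3 * r ^ 2 + 3 * r ^ 4 + r ^ 6 := by rw [ha_def]; ring
      linarith
    have hExp := (Real.exp_pos (-s)).le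
    calc ((Real.exp (-t / (2 * a)) - Real.exp (-t / (2 * r ^ 2))) *
        (Real.sin (t * r) / r)) ^ 2
        = (Real.exp (-t / (2 * a)) - Real.exp (-t / (2 * r ^ 2))) ^ 2 *
            (Real.sin (t * r) / r) ^ 2 := by ring
      _ ≤ (Real.exp (-t / (2 * a)) * (t / (2 * r ^ 2 * a))) ^ 2 * (1 / r) ^ 2 := by
          apply mul_le_mul e1 e2 (sq_nonneg _) (sq_nonneg _)
      _ = Real.exp (-s) * (t ^ 2 / (4 * r ^ 6 * a ^ 2)) := by
          rw [← e3]; field_simp; ring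
      _ ≤ Real.exp (-s) * (s ^ 2 * 2 / a ^ 3) := by
          apply mul_le_mul_of_nonneg_left _ hExp
          rw [div_le_div_iff₀ (by positivity) (by positivity)]
          have : t ^ 2 = s ^ 2 * a ^ 2 := by rw [hts]; ring
          rw [this]
          nlinarith [mul_le_mul_of_nonneg_left e4 (mul_nonneg (sq_nonneg s) (sq_nonneg a))]
      _ = Real.exp (-s) * s ^ 2 * 2 / a ^ 3 := by ring
  -- key polynomial-exponential bound
  have h1t : (0:ℝ) < 1 + t := by linarith
  have hns : -l - 3 = -(l + 3) := by ring
  have hpt : (0:ℝ) < (1 + t) ^ (l + 3) := Real.rpow_pos_of_pos h1t _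
  have c1 : (1 + t) ^ (l + 3) ≤ (1 + s) ^ (l + 3) * a ^ (l + 3) := by
    have h1t' : 1 + t ≤ (1 + s) * a := by nlinarith [hts]
    calc (1 + t) ^ (l + 3) ≤ ((1 + s) * a) ^ (l + 3) :=
          Real.rpow_le_rpow h1t.le h1t' (by linarith)
      _ = (1 + s) ^ (l + 3) * a ^ (l + 3) := Real.mul_rpow (by linarith) ha0.le
  have c2 : s ^ 2 * (1 + s) ^ (l + 3) * Real.exp (-s) ≤ (N:ℝ) ^ N := by
    have d1 : s ^ 2 ≤ (1 + s) ^ ((2:ℕ):ℝ) := by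
      rw [Real.rpow_natCast]; nlinarith
    calc s ^ 2 * (1 + s) ^ (l + 3) * Real.exp (-s)
        ≤ (1 + s) ^ ((2:ℕ):ℝ) * (1 + s) ^ (l + 3) * Real.exp (-s) := by
          apply mul_le_mul_of_nonneg_right _ (Real.exp_pos _).le
          exact mul_le_mul_of_nonneg_right d1 (Real.rpow_nonneg (by linarith) _)
      _ = (1 + s) ^ (l + 5) * Real.exp (-s) := by
          rw [← Real.rpow_add (by linarith : (0:ℝ) < 1 + s)]
          congr 1
          push_cast
          ring
      _ ≤ (1 + s) ^ ((N:ℕ):ℝ) * Real.exp (-s) := by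
          apply mul_le_mul_of_nonneg_right _ (Real.exp_pos _).le
          exact Real.rpow_le_rpow_of_exponent_le (by linarith) hN
      _ = (1 + s) ^ N * Real.exp (-s) := by rw [Real.rpow_natCast]
      _ ≤ (N:ℝ) ^ N := aux_pow_exp N hN1 s hs
  have c3 : a ^ (l + 3) = a ^ l * a ^ (3:ℕ) := by
    rw [← Real.rpow_natCast a 3, ← Real.rpow_add ha0]
    norm_num
  have hal : (0:ℝ) ≤ a ^ l := Real.rpow_nonneg ha0.le _
  have target' : Real.exp (-s) * s ^ 2 * 2 * (1 + t) ^ (l + 3) ≤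
      2 * (N:ℝ) ^ N * a ^ l * a ^ 3 := by
    calc Real.exp (-s) * s ^ 2 * 2 * (1 + t) ^ (l + 3)
        ≤ Real.exp (-s) * s ^ 2 * 2 * ((1 + s) ^ (l + 3) * a ^ (l + 3)) := by
          apply mul_le_mul_of_nonneg_left c1 (by positivity)
      _ = (s ^ 2 * (1 + s) ^ (l + 3) * Real.exp (-s)) * (2 * a ^ (l + 3)) := by ring
      _ ≤ (N:ℝ) ^ N * (2 * a ^ (l + 3)) := by
          apply mul_le_mul_of_nonneg_right c2
          have := Real.rpow_nonneg ha0.le (l + 3)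
          linarith
      _ = 2 * (N:ℝ) ^ N * a ^ l * a ^ 3 := by rw [c3]; ring
  have hkey : Real.exp (-s) * s ^ 2 * 2 / a ^ 3 ≤
      2 * (N:ℝ) ^ N * a ^ l * (1 + t) ^ (-l - 3) := by
    have ha3 : (0:ℝ) < a ^ 3 := by positivity
    calc Real.exp (-s) * s ^ 2 * 2 / a ^ 3
        = (Real.exp (-s) * s ^ 2 * 2 * (1 + t) ^ (l + 3)) / (a ^ 3 * (1 + t) ^ (l + 3)) := by
          field_simp
      _ ≤ (2 * (N:ℝ) ^ N * a ^ l * a ^ 3) / (a ^ 3 * (1 + t) ^ (l + 3)) :=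
          div_le_div_of_nonneg_right target' (mul_pos ha3 hpt).le
      _ = 2 * (N:ℝ) ^ N * a ^ l * (1 + t) ^ (-l - 3) := by
          rw [hns, Real.rpow_neg h1t.le]
          field_simp
  linarith [hsq.trans hkey]


set_option maxHeartbeats 1000000 in
/-- High-frequency estimate for the first term in the proof of Lemma 4.1.
Stated on the Fourier side: `v₁ = û₁ ∈ H^l`. -/
theorem stmt_14 (n : ℕ) (hn : 1 ≤ n) (l : ℝ) (hl : 0 ≤ l) :
    ∃ C > (0 : ℝ), ∀ v₁ : Rn n → ℂ, MemHC l v₁ →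
      ∀ t : ℝ, 0 ≤ t →
        (∫ ξ in {ξ : Rn n | 1 ≤ ‖ξ‖},
            ‖v₁ ξ * (((Real.exp (-t / (2 * (1 + ‖ξ‖ ^ 2))) - Real.exp (-t / (2 * ‖ξ‖ ^ 2))) *
              (Real.sin (t * ‖ξ‖) / ‖ξ‖) : ℝ) : ℂ)‖ ^ 2) ≤
          C * HNormC l v₁ ^ 2 * (1 + t) ^ (-l - 3) := by
  set N : ℕ := ⌈l⌉₊ + 5 with hN_def
  have hN1 : 1 ≤ N := by omega
  have hNl : l + 5 ≤ (N:ℝ) := by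
    have h := Nat.le_ceil l
    have : ((⌈l⌉₊ : ℝ) + 5 : ℝ) = (N:ℝ) := by push_cast [hN_def]; ring
    linarith
  have hNpos : (0:ℝ) < (N:ℝ) ^ N := by
    apply pow_pos
    exact_mod_cast Nat.lt_of_lt_of_le Nat.zero_lt_one hN1
  refine ⟨2 * (N:ℝ) ^ N, by linarith, ?_⟩
  intro v₁ hv t ht
  have h1t : (0:ℝ) < 1 + t := by linarith
  have hrp : (0:ℝ) < (1 + t) ^ (-l - 3) := Real.rpow_pos_of_pos h1t _
  set S : Set (Rn n) := {ξ : Rn n | 1 ≤ ‖ξ‖} with hS_def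
  have hS : MeasurableSet S := by
    have : S = (fun ξ : Rn n => ‖ξ‖) ⁻¹' (Set.Ici 1) := rfl
    rw [this]
    exact measurable_norm measurableSet_Ici
  set g : Rn n → ℝ := fun ξ => (1 + ‖ξ‖ ^ 2) ^ l * ‖v₁ ξ‖ ^ 2 with hg_def
  have hg_int : Integrable g := hv
  have hg_nonneg : ∀ ξ, 0 ≤ g ξ := fun ξ => by
    apply mul_nonneg (Real.rpow_nonneg (by positivity) _) (sq_nonneg _)
  set K : ℝ := 2 * (N:ℝ) ^ N * (1 + t) ^ (-l - 3) with hK_def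
  have hK0 : 0 ≤ K := by
    apply mul_nonneg (by linarith) hrp.le
  set M : Rn n → ℝ := fun ξ =>
    (Real.exp (-t / (2 * (1 + ‖ξ‖ ^ 2))) - Real.exp (-t / (2 * ‖ξ‖ ^ 2))) *
      (Real.sin (t * ‖ξ‖) / ‖ξ‖) with hM_def
  have hM_meas : Measurable M := by
    apply Measurable.mul
    · apply Measurable.sub
      · exact (Real.measurable_exp.comp ((measurable_norm.pow_const 2).const_add 1
          |>.const_mul 2 |>.const_div (-t)))
      · exact (Real.measurable_exp.comp ((measurable_norm.pow_const 2)
          |>.const_mul 2 |>.const_div (-t)))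
    · exact (Real.measurable_sin.comp (measurable_norm.const_mul t)).div measurable_norm
  have hv2_meas : AEMeasurable (fun ξ : Rn n => ‖v₁ ξ‖ ^ 2) := by
    have h2 : Measurable (fun ξ : Rn n => ((1 + ‖ξ‖ ^ 2) ^ l)⁻¹) :=
      (((Real.continuous_rpow_const hl).comp
        (continuous_const.add (continuous_norm.pow 2))).measurable).inv
    have heq : (fun ξ : Rn n => ‖v₁ ξ‖ ^ 2) =
        fun ξ => ((1 + ‖ξ‖ ^ 2) ^ l)⁻¹ * g ξ := by
      funext ξ
      rw [hg_def]
      rw [inv_mul_cancel_left₀ (ne_of_gt (Real.rpow_pos_of_pos (by positivity) _))]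
    rw [heq]
    exact h2.aemeasurable.mul hg_int.aemeasurable
  have hf_eq : ∀ ξ : Rn n,
      ‖v₁ ξ * (((Real.exp (-t / (2 * (1 + ‖ξ‖ ^ 2))) - Real.exp (-t / (2 * ‖ξ‖ ^ 2))) *
        (Real.sin (t * ‖ξ‖) / ‖ξ‖) : ℝ) : ℂ)‖ ^ 2 = ‖v₁ ξ‖ ^ 2 * M ξ ^ 2 := by
    intro ξ
    rw [norm_mul, Complex.norm_real, mul_pow, Real.norm_eq_abs, sq_abs, hM_def]
  have hpt : ∀ ξ ∈ S, ‖v₁ ξ‖ ^ 2 * M ξ ^ 2 ≤ K * g ξ := by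
    intro ξ hξ
    have hr : 1 ≤ ‖ξ‖ := hξ
    have hb := aux_pointwise l hl N hN1 hNl t ‖ξ‖ ht hr
    calc ‖v₁ ξ‖ ^ 2 * M ξ ^ 2
        ≤ ‖v₁ ξ‖ ^ 2 * (2 * (N:ℝ) ^ N * (1 + ‖ξ‖ ^ 2) ^ l * (1 + t) ^ (-l - 3)) :=
          mul_le_mul_of_nonneg_left hb (sq_nonneg _)
      _ = K * g ξ := by rw [hK_def, hg_def]; ring
  have hKg_int : Integrable (fun ξ => K * g ξ) := hg_int.const_mul K
  have hf_int : IntegrableOn (fun ξ => ‖v₁ ξ‖ ^ 2 * M ξ ^ 2) S := by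
    apply Integrable.mono' hKg_int.integrableOn
    · exact (hv2_meas.mul (hM_meas.pow_const 2).aemeasurable).aestronglyMeasurable.restrict
    · filter_upwards [ae_restrict_mem hS] with ξ hξ
      rw [Real.norm_eq_abs, abs_of_nonneg (mul_nonneg (sq_nonneg _) (sq_nonneg _))]
      exact hpt ξ hξ
  have hint_nonneg : (0:ℝ) ≤ ∫ ξ, g ξ := integral_nonneg hg_nonneg
  calc (∫ ξ in S,
        ‖v₁ ξ * (((Real.exp (-t / (2 * (1 + ‖ξ‖ ^ 2))) - Real.exp (-t / (2 * ‖ξ‖ ^ 2))) *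
          (Real.sin (t * ‖ξ‖) / ‖ξ‖) : ℝ) : ℂ)‖ ^ 2)
      = ∫ ξ in S, ‖v₁ ξ‖ ^ 2 * M ξ ^ 2 := by
        apply integral_congr_ae
        filter_upwards with ξ using hf_eq ξ
    _ ≤ ∫ ξ in S, K * g ξ := setIntegral_mono_on hf_int hKg_int.integrableOn hS hpt
    _ ≤ ∫ ξ, K * g ξ := by
        apply setIntegral_le_integral hKg_int
        filter_upwards with ξ using mul_nonneg hK0 (hg_nonneg ξ)
    _ = K * ∫ ξ, g ξ := integral_const_mul K _
    _ = 2 * (N:ℝ) ^ N * HNormC l v₁ ^ 2 * (1 + t) ^ (-l - 3) := by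
        rw [HNormC, hK_def]
        rw [← Real.rpow_natCast ((∫ ξ, (1 + ‖ξ‖ ^ 2) ^ l * ‖v₁ ξ‖ ^ 2) ^ ((1:ℝ)/2)) 2,
          ← Real.rpow_mul hint_nonneg]
        norm_num
        ring
end
end

section
/- Let n ≥ 1 be an integer, l ≥ 0 a real number, and u₀ ∈ H^{l+1}(ℝⁿ). Then there exists a constant C > 0, depending only on n and l, such that for all t ≥ 0, ∫_{|ξ| ≥ 1} | û₀(ξ)·( e^{−t/(2(1+|ξ|²))} − e^{−t/(2|ξ|²)} )·cos(t|ξ|) |² dξ ≤ C·‖u₀‖²_{H^{l+1}}·(1+t)^{−l−3}. -/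
open MeasureTheory Real Set

noncomputable section

open DampedPlate

private lemma stmt15_ptwise (l : ℝ) (hl : 0 ≤ l) :
    ∃ C > (0:ℝ), ∀ t r : ℝ, 0 ≤ t → 1 ≤ r →
      ((Real.exp (-t / (2 * (1 + r ^ 2))) - Real.exp (-t / (2 * r ^ 2))) *
          Real.cos (t * r)) ^ 2 ≤ C * (1 + r ^ 2) ^ (l + 1) * (1 + t) ^ (-l - 3) := by
  set m : ℕ := ⌈l⌉₊ + 5 with hm
  refine ⟨Real.exp 1 * (m.factorial : ℝ), by positivity, fun t r ht hr => ?_⟩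
  have hr2 : (1:ℝ) ≤ r ^ 2 := one_le_pow₀ hr
  set A : ℝ := 1 + r ^ 2 with hA
  have hA2 : (2:ℝ) ≤ A := by simp [hA]; linarith
  have hA0 : (0:ℝ) < A := by linarith
  have hAr : A ≤ 2 * r ^ 2 := by simp [hA]; linarith
  set a : ℝ := t / (2 * A) with ha
  set b : ℝ := t / (2 * r ^ 2) with hb
  have hab : a ≤ b := by
    apply div_le_div_of_nonneg_left ht (by positivity)
    linarith
  have ha0 : 0 ≤ a := by positivity
  -- diff bound
  have hdiff : Real.exp (-a) - Real.exp (-b) ≤ (b - a) * Real.exp (-a) := by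
    have h1 : 1 - (b - a) ≤ Real.exp (-(b - a)) := by
      have := Real.add_one_le_exp (-(b - a)); linarith
    have h2 : Real.exp (-b) = Real.exp (-a) * Real.exp (-(b - a)) := by
      rw [← Real.exp_add]; ring_nf
    nlinarith [Real.exp_pos (-a)]
  have hdiff0 : 0 ≤ Real.exp (-a) - Real.exp (-b) :=
    sub_nonneg.2 (Real.exp_le_exp.2 (by linarith))
  -- step 1 : remove cos
  have hcos : ((Real.exp (-a) - Real.exp (-b)) * Real.cos (t * r)) ^ 2
      ≤ ((b - a) * Real.exp (-a)) ^ 2 := by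
    have h1 : Real.cos (t * r) ^ 2 ≤ 1 := by
      nlinarith [Real.neg_one_le_cos (t * r), Real.cos_le_one (t * r)]
    calc ((Real.exp (-a) - Real.exp (-b)) * Real.cos (t * r)) ^ 2
        = (Real.exp (-a) - Real.exp (-b)) ^ 2 * Real.cos (t * r) ^ 2 := by ring
      _ ≤ (Real.exp (-a) - Real.exp (-b)) ^ 2 * 1 := by
          apply mul_le_mul_of_nonneg_left h1 (by positivity)
      _ ≤ ((b - a) * Real.exp (-a)) ^ 2 := by
          rw [mul_one]; exact pow_le_pow_left₀ hdiff0 hdiff 2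
  -- (b-a)^2 * exp(-2a) ≤ t^2/A^4 * exp(-t/A)
  have hba : b - a = t / (2 * r ^ 2 * A) := by
    rw [hb, ha]; field_simp; ring
  have hba2 : (b - a) ^ 2 ≤ t ^ 2 / A ^ 4 := by
    rw [hba, div_pow, div_le_div_iff₀ (by positivity) (by positivity)]
    calc t ^ 2 * A ^ 4 = t ^ 2 * (A ^ 2 * A ^ 2) := by ring
      _ ≤ t ^ 2 * ((2 * r ^ 2) ^ 2 * A ^ 2) := by
          apply mul_le_mul_of_nonneg_left _ (by positivity)
          apply mul_le_mul_of_nonneg_right _ (by positivity)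
          exact pow_le_pow_left₀ hA0.le hAr 2
      _ = t ^ 2 * (2 * r ^ 2 * A) ^ 2 := by ring
  have hexp2a : Real.exp (-a) ^ 2 = Real.exp (-(t / A)) := by
    rw [← Real.exp_nat_mul]  -- maybe wrong; fix below
    congr 1
    rw [ha]; push_cast; field_simp
  -- key: t^2 * exp(-(t/A)) * (1+t)^(l+3) ≤ exp 1 * (m.factorial : ℝ) * A ^ (l+5)
  have hT : (1:ℝ) ≤ 1 + t := by linarith
  have hT0 : (0:ℝ) < 1 + t := by linarith
  set s : ℝ := t / A with hs
  have hs0 : 0 ≤ s := by positivity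
  have key : t ^ 2 * Real.exp (-s) * (1 + t) ^ (l + 3) ≤ Real.exp 1 * (m.factorial : ℝ) * A ^ (l + 5) := by
    have h1 : t ^ 2 * (1 + t) ^ (l + 3) ≤ (1 + t) ^ (l + 5) := by
      have : ((1 + t) ^ (2:ℕ) : ℝ) = (1 + t) ^ ((2:ℕ):ℝ) := (Real.rpow_natCast _ 2).symm
      calc t ^ 2 * (1 + t) ^ (l + 3) ≤ (1 + t) ^ (2:ℕ) * (1 + t) ^ (l + 3) := by
            apply mul_le_mul_of_nonneg_right (pow_le_pow_left₀ ht (by linarith) 2)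
              (Real.rpow_nonneg hT0.le _)
        _ = (1 + t) ^ ((2:ℝ) + (l + 3)) := by
            rw [this, ← Real.rpow_add hT0]; norm_num
        _ = (1 + t) ^ (l + 5) := by ring_nf
    have h2 : (1 + t) ^ (l + 5) ≤ A ^ (l + 5) * (1 + s) ^ (l + 5) := by
      rw [← Real.mul_rpow hA0.le (by linarith)]
      apply Real.rpow_le_rpow hT0.le _ (by linarith)
      have : A * (1 + s) = A + t := by rw [hs, mul_add, mul_one, mul_div_assoc', mul_comm A t, mul_div_assoc, div_self hA0.ne', mul_one]
      rw [this]; linarith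
    have h3 : (1 + s) ^ (l + 5) ≤ (1 + s) ^ (m:ℕ) := by
      rw [← Real.rpow_natCast (1 + s) m]
      apply Real.rpow_le_rpow_of_exponent_le (by linarith)
      have := Nat.le_ceil l
      push_cast [hm]; linarith
    have h4 : (1 + s) ^ (m:ℕ) * Real.exp (-s) ≤ Real.exp 1 * (m.factorial : ℝ) := by
      have h5 : (1 + s) ^ (m:ℕ) ≤ (m.factorial : ℝ) * Real.exp (1 + s) := by
        have := Real.pow_div_factorial_le_exp (x := 1 + s) (by linarith) m
        rw [div_le_iff₀ (by positivity)] at this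
        linarith [this]
      calc (1 + s) ^ (m:ℕ) * Real.exp (-s) ≤ ((m.factorial : ℝ) * Real.exp (1 + s)) * Real.exp (-s) := by
            apply mul_le_mul_of_nonneg_right h5 (Real.exp_pos _).le
        _ = Real.exp 1 * (m.factorial : ℝ) := by rw [mul_assoc, ← Real.exp_add]; ring_nf
    calc t ^ 2 * Real.exp (-s) * (1 + t) ^ (l + 3)
        = (t ^ 2 * (1 + t) ^ (l + 3)) * Real.exp (-s) := by ring
      _ ≤ (1 + t) ^ (l + 5) * Real.exp (-s) := by
          apply mul_le_mul_of_nonneg_right h1 (Real.exp_pos _).le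
      _ ≤ (A ^ (l + 5) * (1 + s) ^ (l + 5)) * Real.exp (-s) := by
          apply mul_le_mul_of_nonneg_right h2 (Real.exp_pos _).le
      _ ≤ (A ^ (l + 5) * (1 + s) ^ (m:ℕ)) * Real.exp (-s) := by
          apply mul_le_mul_of_nonneg_right _ (Real.exp_pos _).le
          exact mul_le_mul_of_nonneg_left h3 (Real.rpow_nonneg hA0.le _)
      _ = A ^ (l + 5) * ((1 + s) ^ (m:ℕ) * Real.exp (-s)) := by ring
      _ ≤ A ^ (l + 5) * (Real.exp 1 * (m.factorial : ℝ)) := by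
          exact mul_le_mul_of_nonneg_left h4 (Real.rpow_nonneg hA0.le _)
      _ = Real.exp 1 * (m.factorial : ℝ) * A ^ (l + 5) := by ring
  -- assemble
  have hfin : t ^ 2 * Real.exp (-s) ≤ Real.exp 1 * (m.factorial : ℝ) * A ^ (l + 5) * (1 + t) ^ (-l - 3) := by
    have hTl : (0:ℝ) < (1 + t) ^ (l + 3) := Real.rpow_pos_of_pos hT0 _
    rw [← mul_le_mul_iff_of_pos_right hTl]
    calc t ^ 2 * Real.exp (-s) * (1 + t) ^ (l + 3) ≤ Real.exp 1 * (m.factorial : ℝ) * A ^ (l + 5) := key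
      _ = Real.exp 1 * (m.factorial : ℝ) * A ^ (l + 5) * ((1 + t) ^ (-l - 3) * (1 + t) ^ (l + 3)) := by
          rw [← Real.rpow_add hT0]; norm_num
      _ = Real.exp 1 * (m.factorial : ℝ) * A ^ (l + 5) * (1 + t) ^ (-l - 3) * (1 + t) ^ (l + 3) := by ring
  have hA45 : A ^ (l + 5) / A ^ 4 = A ^ (l + 1) := by
    rw [← Real.rpow_natCast A 4, ← Real.rpow_sub hA0]; ring_nf
  rw [show -t / (2 * A) = -a from by rw [ha]; ring,
    show -t / (2 * r ^ 2) = -b from by rw [hb]; ring]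
  calc ((Real.exp (-a) - Real.exp (-b)) * Real.cos (t * r)) ^ 2
      ≤ ((b - a) * Real.exp (-a)) ^ 2 := hcos
    _ = (b - a) ^ 2 * Real.exp (-a) ^ 2 := by ring
    _ ≤ (t ^ 2 / A ^ 4) * Real.exp (-s) := by
        rw [hexp2a]
        exact mul_le_mul_of_nonneg_right hba2 (Real.exp_pos _).le
    _ = (t ^ 2 * Real.exp (-s)) / A ^ 4 := by ring
    _ ≤ (Real.exp 1 * (m.factorial : ℝ) * A ^ (l + 5) * (1 + t) ^ (-l - 3)) / A ^ 4 := by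
        apply div_le_div_of_nonneg_right hfin -- wrong name maybe
        positivity
    _ = Real.exp 1 * (m.factorial : ℝ) * (A ^ (l + 5) / A ^ 4) * (1 + t) ^ (-l - 3) := by ring
    _ = Real.exp 1 * (m.factorial : ℝ) * A ^ (l + 1) * (1 + t) ^ (-l - 3) := by rw [hA45]


/-- High-frequency estimate for the second term in the proof of Lemma 4.1.
Stated on the Fourier side: `v₀ = û₀ ∈ H^{l+1}`. -/
theorem stmt_15 (n : ℕ) (hn : 1 ≤ n) (l : ℝ) (hl : 0 ≤ l) :
    ∃ C > (0 : ℝ), ∀ v₀ : Rn n → ℂ, MemHC (l + 1) v₀ →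
      ∀ t : ℝ, 0 ≤ t →
        (∫ ξ in {ξ : Rn n | 1 ≤ ‖ξ‖},
            ‖v₀ ξ * (((Real.exp (-t / (2 * (1 + ‖ξ‖ ^ 2))) - Real.exp (-t / (2 * ‖ξ‖ ^ 2))) *
              Real.cos (t * ‖ξ‖) : ℝ) : ℂ)‖ ^ 2) ≤
          C * HNormC (l + 1) v₀ ^ 2 * (1 + t) ^ (-l - 3) := by
  obtain ⟨C, hC, hpt⟩ := stmt15_ptwise l hl
  refine ⟨C, hC, fun v₀ hv t ht => ?_⟩
  have hS : MeasurableSet {ξ : Rn n | 1 ≤ ‖ξ‖} :=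
    (isClosed_le continuous_const continuous_norm).measurableSet
  have hint : Integrable (fun ξ : Rn n => (1 + ‖ξ‖ ^ 2) ^ (l + 1) * ‖v₀ ξ‖ ^ 2) := hv
  set g : Rn n → ℝ :=
    fun ξ => C * (1 + t) ^ (-l - 3) * ((1 + ‖ξ‖ ^ 2) ^ (l + 1) * ‖v₀ ξ‖ ^ 2) with hgdef
  have hg : Integrable g := hint.const_mul _
  have hg0 : ∀ ξ, 0 ≤ g ξ := fun ξ => by positivity
  have step1 : (∫ ξ in {ξ : Rn n | 1 ≤ ‖ξ‖},
      ‖v₀ ξ * (((Real.exp (-t / (2 * (1 + ‖ξ‖ ^ 2))) - Real.exp (-t / (2 * ‖ξ‖ ^ 2))) *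
        Real.cos (t * ‖ξ‖) : ℝ) : ℂ)‖ ^ 2) ≤ ∫ ξ in {ξ : Rn n | 1 ≤ ‖ξ‖}, g ξ := by
    apply integral_mono_of_nonneg
    · exact Filter.Eventually.of_forall fun ξ => by positivity
    · exact hg.restrict
    · filter_upwards [ae_restrict_mem hS] with ξ hξ
      have hξ' : 1 ≤ ‖ξ‖ := hξ
      have hnn : (0:ℝ) ≤ ‖v₀ ξ‖ ^ 2 := by positivity
      calc ‖v₀ ξ * (((Real.exp (-t / (2 * (1 + ‖ξ‖ ^ 2))) - Real.exp (-t / (2 * ‖ξ‖ ^ 2))) *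
              Real.cos (t * ‖ξ‖) : ℝ) : ℂ)‖ ^ 2
          = ‖v₀ ξ‖ ^ 2 * ((Real.exp (-t / (2 * (1 + ‖ξ‖ ^ 2))) - Real.exp (-t / (2 * ‖ξ‖ ^ 2))) *
              Real.cos (t * ‖ξ‖)) ^ 2 := by
            rw [norm_mul, mul_pow, Complex.norm_real, Real.norm_eq_abs, sq_abs]
        _ ≤ ‖v₀ ξ‖ ^ 2 * (C * (1 + ‖ξ‖ ^ 2) ^ (l + 1) * (1 + t) ^ (-l - 3)) :=
            mul_le_mul_of_nonneg_left (hpt t ‖ξ‖ ht hξ') hnn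
        _ = g ξ := by rw [hgdef]; ring
  have step2 : (∫ ξ in {ξ : Rn n | 1 ≤ ‖ξ‖}, g ξ) ≤ ∫ ξ, g ξ :=
    setIntegral_le_integral hg (Filter.Eventually.of_forall hg0)
  have hX0 : (0:ℝ) ≤ ∫ ξ : Rn n, (1 + ‖ξ‖ ^ 2) ^ (l + 1) * ‖v₀ ξ‖ ^ 2 :=
    integral_nonneg fun ξ => by positivity
  have hHN : HNormC (l + 1) v₀ ^ 2 = ∫ ξ : Rn n, (1 + ‖ξ‖ ^ 2) ^ (l + 1) * ‖v₀ ξ‖ ^ 2 := by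
    rw [HNormC, ← Real.rpow_natCast _ 2, ← Real.rpow_mul hX0]
    norm_num
  have hg_int : (∫ ξ, g ξ) = C * HNormC (l + 1) v₀ ^ 2 * (1 + t) ^ (-l - 3) := by
    rw [hgdef, integral_const_mul, hHN]
    ring
  calc (∫ ξ in {ξ : Rn n | 1 ≤ ‖ξ‖},
        ‖v₀ ξ * (((Real.exp (-t / (2 * (1 + ‖ξ‖ ^ 2))) - Real.exp (-t / (2 * ‖ξ‖ ^ 2))) *
          Real.cos (t * ‖ξ‖) : ℝ) : ℂ)‖ ^ 2)
      ≤ ∫ ξ in {ξ : Rn n | 1 ≤ ‖ξ‖}, g ξ := step1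
    _ ≤ ∫ ξ, g ξ := step2
    _ = C * HNormC (l + 1) v₀ ^ 2 * (1 + t) ^ (-l - 3) := hg_int
end
end

section
/- Let n ≥ 1 be an integer, l ≥ 0 a real number, u₁ ∈ H^{l}(ℝⁿ) and u₀ ∈ H^{l+1}(ℝⁿ). Then there exists a constant C > 0, depending only on n and l, such that for all t ≥ 1, ( ∫_{|ξ| ≥ 1} | û₁(ξ)·e^{−t/(2|ξ|²)}·sin(t|ξ|)/|ξ| + û₀(ξ)·e^{−t/(2|ξ|²)}·cos(t|ξ|) |² dξ )^{1/2} ≤ C·( ‖u₁‖_{H^l} + ‖u₀‖_{H^{l+1}} )·t^{−(l+1)/2}. -/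
open MeasureTheory Real Set

noncomputable section

open DampedPlate

lemma aux_exp_neg_le {s x : ℝ} (hs : 0 < s) (hx : 0 < x) :
    Real.exp (-x) ≤ Real.exp (Real.log s * s) * x ^ (-s) := by
  have hlog : Real.log (x / s) ≤ x / s - 1 := Real.log_le_sub_one_of_pos (by positivity)
  have h2 : Real.log x * s ≤ x + Real.log s * s := by
    have hd : Real.log (x / s) = Real.log x - Real.log s := Real.log_div hx.ne' hs.ne'
    have h3 : s * (Real.log x - Real.log s) ≤ s * (x / s - 1) :=
      mul_le_mul_of_nonneg_left (hd ▸ hlog) hs.le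
    have h4 : s * (x / s - 1) = x - s := by field_simp
    nlinarith
  have hxs : x ^ s ≤ Real.exp x * Real.exp (Real.log s * s) := by
    rw [Real.rpow_def_of_pos hx, ← Real.exp_add]
    exact Real.exp_le_exp.mpr (by linarith)
  rw [Real.rpow_neg hx.le, ← div_eq_mul_inv, le_div_iff₀ (Real.rpow_pos_of_pos hx s),
    Real.exp_neg, inv_mul_le_iff₀ (Real.exp_pos x)]
  exact hxs

lemma aux_sqrt_add {A B : ℝ} (hA : 0 ≤ A) (hB : 0 ≤ B) :
    (A + B) ^ ((1 : ℝ) / 2) ≤ A ^ ((1 : ℝ) / 2) + B ^ ((1 : ℝ) / 2) := by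
  rw [← Real.sqrt_eq_rpow, ← Real.sqrt_eq_rpow, ← Real.sqrt_eq_rpow]
  have h : A + B ≤ (Real.sqrt A + Real.sqrt B) ^ 2 := by
    nlinarith [Real.sq_sqrt hA, Real.sq_sqrt hB, Real.sqrt_nonneg A, Real.sqrt_nonneg B]
  calc Real.sqrt (A + B) ≤ Real.sqrt ((Real.sqrt A + Real.sqrt B) ^ 2) := Real.sqrt_le_sqrt h
  _ = Real.sqrt A + Real.sqrt B := Real.sqrt_sq (by positivity)

/-- High-frequency decay of the wave-like profile: in `{|ξ| ≥ 1}` its `L²` norm decays like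
`t^{-(l+1)/2}`. Stated on the Fourier side: `v₀ = û₀ ∈ H^{l+1}`, `v₁ = û₁ ∈ H^l`. -/
theorem stmt_16 (n : ℕ) (hn : 1 ≤ n) (l : ℝ) (hl : 0 ≤ l) :
    ∃ C > (0 : ℝ), ∀ v₀ v₁ : Rn n → ℂ, MemHC (l + 1) v₀ → MemHC l v₁ →
      ∀ t : ℝ, 1 ≤ t →
        (∫ ξ in {ξ : Rn n | 1 ≤ ‖ξ‖}, ‖waveC v₀ v₁ t ξ‖ ^ 2) ^ ((1 : ℝ) / 2) ≤
          C * (HNormC l v₁ + HNormC (l + 1) v₀) * t ^ (-((l + 1) / 2)) := by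
  have hs : (0 : ℝ) < l + 1 := by linarith
  set Cs : ℝ := Real.exp (Real.log (l + 1) * (l + 1)) with hCs_def
  have hCs : 0 < Cs := Real.exp_pos _
  refine ⟨(2 * Cs) ^ ((1 : ℝ) / 2), Real.rpow_pos_of_pos (by positivity) _, ?_⟩
  intro v₀ v₁ h₀ h₁ t ht
  have ht0 : (0 : ℝ) < t := by linarith
  have htn : (0 : ℝ) ≤ t ^ (-(l + 1)) := Real.rpow_nonneg ht0.le _
  set S : Set (Rn n) := {ξ : Rn n | 1 ≤ ‖ξ‖} with hS_def
  have hS : MeasurableSet S := measurableSet_le measurable_const measurable_norm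
  set A : ℝ := ∫ ξ : Rn n, (1 + ‖ξ‖ ^ 2) ^ l * ‖v₁ ξ‖ ^ 2 with hA_def
  set B : ℝ := ∫ ξ : Rn n, (1 + ‖ξ‖ ^ 2) ^ (l + 1) * ‖v₀ ξ‖ ^ 2 with hB_def
  have hA0 : 0 ≤ A := integral_nonneg fun ξ => by positivity
  have hB0 : 0 ≤ B := integral_nonneg fun ξ => by positivity
  set D : ℝ := Cs * t ^ (-(l + 1)) with hD_def
  have hD0 : 0 ≤ D := mul_nonneg hCs.le htn
  set G : Rn n → ℝ := fun ξ => 2 * D *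
    ((1 + ‖ξ‖ ^ 2) ^ l * ‖v₁ ξ‖ ^ 2 + (1 + ‖ξ‖ ^ 2) ^ (l + 1) * ‖v₀ ξ‖ ^ 2) with hG_def
  clear_value Cs A B D G
  have hGint : Integrable G := by
    rw [hG_def]
    exact (Integrable.add h₁ h₀).const_mul _
  have hG0 : ∀ ξ, 0 ≤ G ξ := by
    intro ξ
    have h1 : (0:ℝ) ≤ (1 + ‖ξ‖ ^ 2) ^ l * ‖v₁ ξ‖ ^ 2 := by positivity
    have h2 : (0:ℝ) ≤ (1 + ‖ξ‖ ^ 2) ^ (l + 1) * ‖v₀ ξ‖ ^ 2 := by positivity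
    simp only [hG_def]
    nlinarith [h1, h2, hD0]
  -- pointwise bound on S
  have hpoint : ∀ ξ ∈ S, ‖waveC v₀ v₁ t ξ‖ ^ 2 ≤ G ξ := by
    intro ξ hξ
    have hr : (1 : ℝ) ≤ ‖ξ‖ := hξ
    have hr0 : (0 : ℝ) < ‖ξ‖ := by linarith
    set r : ℝ := ‖ξ‖ with hr_def
    clear_value r
    have hr2 : (0 : ℝ) < r ^ 2 := pow_pos hr0 2
    set e : ℝ := Real.exp (-t / (2 * r ^ 2)) with he_def
    clear_value e
    have he0 : 0 < e := he_def ▸ Real.exp_pos _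
    have hn1 : ‖waveC v₀ v₁ t ξ‖ ≤ ‖v₁ ξ‖ * (e / r) + ‖v₀ ξ‖ * e := by
      rw [waveC]
      refine (norm_add_le _ _).trans (add_le_add ?_ ?_)
      · rw [norm_mul, Complex.norm_real, Real.norm_eq_abs, ← hr_def]
        refine mul_le_mul_of_nonneg_left ?_ (norm_nonneg _)
        rw [abs_mul, Real.abs_exp, ← he_def]
        calc e * |Real.sin (t * r) / r| = e * (|Real.sin (t * r)| / r) := by
              rw [abs_div, abs_of_pos hr0]
          _ ≤ e / r := by
              rw [le_div_iff₀ hr0]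
              have heq : e * (|Real.sin (t * r)| / r) * r = e * |Real.sin (t * r)| := by
                field_simp
              rw [heq]
              nlinarith [Real.abs_sin_le_one (t * r), he0.le, abs_nonneg (Real.sin (t * r))]
      · rw [norm_mul, Complex.norm_real, Real.norm_eq_abs, ← hr_def]
        refine mul_le_mul_of_nonneg_left ?_ (norm_nonneg _)
        rw [abs_mul, Real.abs_exp, ← he_def]
        nlinarith [Real.abs_cos_le_one (t * r), he0.le, abs_nonneg (Real.cos (t * r))]
    have hsq : ‖waveC v₀ v₁ t ξ‖ ^ 2 ≤ 2 * (‖v₁ ξ‖ ^ 2 * (e / r) ^ 2 + ‖v₀ ξ‖ ^ 2 * e ^ 2) := by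
      have h1 : 0 ≤ ‖waveC v₀ v₁ t ξ‖ := norm_nonneg _
      have h2 : 0 ≤ ‖v₁ ξ‖ * (e / r) := mul_nonneg (norm_nonneg _) (by positivity)
      have h3 : 0 ≤ ‖v₀ ξ‖ * e := mul_nonneg (norm_nonneg _) he0.le
      nlinarith [sq_nonneg (‖v₁ ξ‖ * (e / r) - ‖v₀ ξ‖ * e)]
    have hE : e ^ 2 = Real.exp (-(t / r ^ 2)) := by
      rw [he_def, sq, ← Real.exp_add]
      congr 1
      field_simp
      ring
    have he2 : e ^ 2 ≤ D * (r ^ 2) ^ (l + 1) := by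
      have hx : 0 < t / r ^ 2 := div_pos ht0 hr2
      have h := aux_exp_neg_le hs hx
      have heq : (t / r ^ 2) ^ (-(l + 1)) = (r ^ 2) ^ (l + 1) * t ^ (-(l + 1)) := by
        rw [Real.rpow_neg hx.le, Real.div_rpow ht0.le hr2.le, Real.rpow_neg ht0.le, inv_div,
          div_eq_mul_inv]
      rw [hE]
      calc Real.exp (-(t / r ^ 2)) ≤ Cs * (t / r ^ 2) ^ (-(l + 1)) := by rw [hCs_def]; exact h
        _ = D * (r ^ 2) ^ (l + 1) := by rw [heq, hD_def]; ring
    have hrle : (r ^ 2 : ℝ) ^ (l + 1) ≤ (1 + r ^ 2) ^ (l + 1) :=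
      Real.rpow_le_rpow hr2.le (by linarith) hs.le
    have hrle' : (r ^ 2 : ℝ) ^ l ≤ (1 + r ^ 2) ^ l :=
      Real.rpow_le_rpow hr2.le (by linarith) hl
    have hb0 : e ^ 2 ≤ D * (1 + r ^ 2) ^ (l + 1) :=
      he2.trans (mul_le_mul_of_nonneg_left hrle hD0)
    have hb1 : (e / r) ^ 2 ≤ D * (1 + r ^ 2) ^ l := by
      have hsplit : (r ^ 2 : ℝ) ^ (l + 1) = (r ^ 2) ^ l * r ^ 2 := by
        rw [Real.rpow_add hr2, Real.rpow_one]
      have h1 : (e / r) ^ 2 = e ^ 2 / r ^ 2 := by rw [div_pow]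
      rw [h1, div_le_iff₀ hr2]
      calc e ^ 2 ≤ D * (r ^ 2) ^ (l + 1) := he2
        _ = D * (r ^ 2) ^ l * r ^ 2 := by rw [hsplit]; ring
        _ ≤ D * (1 + r ^ 2) ^ l * r ^ 2 :=
            mul_le_mul_of_nonneg_right (mul_le_mul_of_nonneg_left hrle' hD0) hr2.le
    have hv1 : 0 ≤ ‖v₁ ξ‖ ^ 2 := by positivity
    have hv0 : 0 ≤ ‖v₀ ξ‖ ^ 2 := by positivity
    have hm1 := mul_le_mul_of_nonneg_left hb1 hv1
    have hm0 := mul_le_mul_of_nonneg_left hb0 hv0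
    simp only [hG_def]
    rw [← hr_def]
    linarith [hsq, hm1, hm0]
  -- integral bound
  have hFG : (∫ ξ in S, ‖waveC v₀ v₁ t ξ‖ ^ 2) ≤ ∫ ξ, G ξ := by
    have hSG : (∫ ξ in S, ‖waveC v₀ v₁ t ξ‖ ^ 2) ≤ ∫ ξ in S, G ξ := by
      by_cases hF : IntegrableOn (fun ξ => ‖waveC v₀ v₁ t ξ‖ ^ 2) S volume
      · exact setIntegral_mono_on hF hGint.integrableOn hS hpoint
      · rw [integral_undef hF]
        exact integral_nonneg hG0
    exact hSG.trans (setIntegral_le_integral hGint (Filter.Eventually.of_forall hG0))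
  have hGval : (∫ ξ, G ξ) = 2 * D * (A + B) := by
    simp only [hG_def, hA_def, hB_def]
    rw [MeasureTheory.integral_const_mul, MeasureTheory.integral_add h₁ h₀]
  have hIv : (∫ ξ, G ξ) = 2 * Cs * (t ^ (-(l + 1)) * (A + B)) := by
    rw [hGval, hD_def]; ring
  have hInt0 : 0 ≤ ∫ ξ in S, ‖waveC v₀ v₁ t ξ‖ ^ 2 := integral_nonneg fun ξ => by positivity
  have step1 : (∫ ξ in S, ‖waveC v₀ v₁ t ξ‖ ^ 2) ^ ((1:ℝ)/2) ≤
      (2 * Cs * (t ^ (-(l + 1)) * (A + B))) ^ ((1:ℝ)/2) :=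
    Real.rpow_le_rpow hInt0 (hFG.trans_eq hIv) (by norm_num)
  have hABn : (0:ℝ) ≤ A + B := by linarith
  have step2 : (2 * Cs * (t ^ (-(l + 1)) * (A + B))) ^ ((1:ℝ)/2) =
      (2 * Cs) ^ ((1:ℝ)/2) * (t ^ (-((l + 1) / 2)) * (A + B) ^ ((1:ℝ)/2)) := by
    rw [Real.mul_rpow (by positivity) (mul_nonneg htn hABn), Real.mul_rpow htn hABn]
    congr 2
    rw [← Real.rpow_mul ht0.le]
    congr 1
    ring
  have hH1 : HNormC l v₁ = A ^ ((1:ℝ)/2) := by rw [HNormC, hA_def]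
  have hH0 : HNormC (l + 1) v₀ = B ^ ((1:ℝ)/2) := by rw [HNormC, hB_def]
  calc (∫ ξ in S, ‖waveC v₀ v₁ t ξ‖ ^ 2) ^ ((1:ℝ)/2)
      ≤ (2 * Cs * (t ^ (-(l + 1)) * (A + B))) ^ ((1:ℝ)/2) := step1
    _ = (2 * Cs) ^ ((1:ℝ)/2) * (t ^ (-((l + 1) / 2)) * (A + B) ^ ((1:ℝ)/2)) := step2
    _ ≤ (2 * Cs) ^ ((1:ℝ)/2) *
        (t ^ (-((l + 1) / 2)) * (A ^ ((1:ℝ)/2) + B ^ ((1:ℝ)/2))) := by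
        refine mul_le_mul_of_nonneg_left ?_ (Real.rpow_nonneg (by positivity) _)
        exact mul_le_mul_of_nonneg_left (aux_sqrt_add hA0 hB0) (Real.rpow_nonneg ht0.le _)
    _ = (2 * Cs) ^ ((1:ℝ)/2) * (HNormC l v₁ + HNormC (l + 1) v₀) * t ^ (-((l + 1) / 2)) := by
        rw [hH1, hH0]; ring
end
end

section
/- Let n ≥ 1 and δ > 0, and let u ∈ L^{1,1}(ℝⁿ). Define A(ξ) := ∫_{ℝⁿ} u(x)·(cos(ξ·x) − 1) dx and B(ξ) := ∫_{ℝⁿ} u(x)·sin(ξ·x) dx. Then there exists a constant C > 0, depending only on n and δ, such that for all t ≥ 0, ∫_{|ξ| ≤ δ} | (A(ξ) − i·B(ξ))·e^{−t|ξ|²} |² dξ ≤ C·‖u‖²_{1,1}·(1+t)^{−(n+2)/2}. -/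
open MeasureTheory Real Set

noncomputable section

open DampedPlate

lemma DP_abs_cos_sub_one_le (y : ℝ) : |Real.cos y - 1| ≤ |y| := by
  have h1 := Real.cos_le_one y
  have h2 : Real.sin (y / 2) ^ 2 = 1 / 2 - Real.cos y / 2 := by
    have := Real.sin_sq_eq_half_sub (x := y / 2)
    rwa [show 2 * (y / 2) = y by ring] at this
  have h3 : |Real.sin (y / 2)| ≤ |y / 2| := Real.abs_sin_le_abs
  have h4 : |Real.sin (y / 2)| ≤ 1 := Real.abs_sin_le_one _
  have h5 : Real.sin (y / 2) ^ 2 ≤ |y / 2| := by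
    rw [← sq_abs, sq]
    simpa using mul_le_mul h3 h4 (abs_nonneg _) (abs_nonneg _)
  have h6 : |y / 2| = |y| / 2 := by rw [abs_div]; norm_num
  rw [h6] at h5
  rw [abs_of_nonpos (by linarith : Real.cos y - 1 ≤ 0)]
  linarith

lemma DP_gauss_int {n : ℕ} : Integrable (fun η : Rn n => Real.exp (-‖η‖ ^ 2)) := by
  have h := (GaussianFourier.integrable_cexp_neg_mul_sq_norm_add
      (V := Rn n) (b := 1) (by norm_num) 0 0).norm
  refine h.congr ?_
  filter_upwards with v
  simp [Complex.norm_exp]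
  rw [← Complex.ofReal_pow, Complex.ofReal_re]

lemma DP_int_t {n : ℕ} {t : ℝ} (ht : 1 ≤ t) :
    Integrable (fun ξ : Rn n => ‖ξ‖ ^ 2 * Real.exp (-(2 * t) * ‖ξ‖ ^ 2)) := by
  refine DP_gauss_int.mono' ?_ ?_
  · exact (((continuous_norm.pow 2)).mul
      ((continuous_const.mul (continuous_norm.pow 2)).rexp)).aestronglyMeasurable
  · filter_upwards with ξ
    have h0 : (0:ℝ) ≤ ‖ξ‖ ^ 2 * Real.exp (-(2 * t) * ‖ξ‖ ^ 2) := by positivity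
    rw [Real.norm_eq_abs, abs_of_nonneg h0]
    have h1 : ‖ξ‖ ^ 2 ≤ Real.exp (‖ξ‖ ^ 2) := by
      have := Real.add_one_le_exp (‖ξ‖ ^ 2); linarith
    have h2 : Real.exp (-(2 * t) * ‖ξ‖ ^ 2) ≤ Real.exp (-(2 : ℝ) * ‖ξ‖ ^ 2) := by
      apply Real.exp_le_exp.2; nlinarith [sq_nonneg ‖ξ‖]
    calc ‖ξ‖ ^ 2 * Real.exp (-(2 * t) * ‖ξ‖ ^ 2)
        ≤ Real.exp (‖ξ‖ ^ 2) * Real.exp (-(2:ℝ) * ‖ξ‖ ^ 2) :=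
          mul_le_mul h1 h2 (Real.exp_nonneg _) (Real.exp_nonneg _)
      _ = Real.exp (-‖ξ‖ ^ 2) := by rw [← Real.exp_add]; ring_nf

lemma DP_scale {n : ℕ} {t : ℝ} (ht : 1 ≤ t) :
    (∫ ξ : Rn n, ‖ξ‖ ^ 2 * Real.exp (-(2 * t) * ‖ξ‖ ^ 2))
      = t ^ (-(((n : ℝ) + 2) / 2)) *
        ∫ η : Rn n, ‖η‖ ^ 2 * Real.exp (-(2 : ℝ) * ‖η‖ ^ 2) := by
  have ht0 : (0:ℝ) < t := lt_of_lt_of_le one_pos ht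
  have hs := MeasureTheory.Measure.integral_comp_smul_of_nonneg
    (volume : Measure (Rn n))
    (fun η => ‖η‖ ^ 2 * Real.exp (-(2 : ℝ) * ‖η‖ ^ 2)) (Real.sqrt t) (hR := Real.sqrt_nonneg t)
  have hnorm : ∀ ξ : Rn n, ‖Real.sqrt t • ξ‖ ^ 2 = t * ‖ξ‖ ^ 2 := by
    intro ξ
    rw [norm_smul, Real.norm_eq_abs, abs_of_nonneg (Real.sqrt_nonneg t), mul_pow,
      Real.sq_sqrt ht0.le]
  simp_rw [hnorm] at hs
  rw [finrank_euclideanSpace_fin] at hs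
  have hs' : (t * ∫ ξ : Rn n, ‖ξ‖ ^ 2 * Real.exp (-(2 * t) * ‖ξ‖ ^ 2))
      = (Real.sqrt t ^ n)⁻¹ * ∫ η : Rn n, ‖η‖ ^ 2 * Real.exp (-(2:ℝ) * ‖η‖ ^ 2) := by
    rw [smul_eq_mul] at hs
    rw [← integral_const_mul, ← hs]
    congr 1 with ξ
    ring_nf
  have hpow : (Real.sqrt t ^ n) = t ^ ((n : ℝ) / 2) := by
    rw [Real.sqrt_eq_rpow, ← Real.rpow_natCast (t ^ ((1:ℝ)/2)) n, ← Real.rpow_mul ht0.le]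
    ring_nf
  rw [hpow] at hs'
  have h2 : (∫ ξ : Rn n, ‖ξ‖ ^ 2 * Real.exp (-(2 * t) * ‖ξ‖ ^ 2))
      = t⁻¹ * (t ^ ((n : ℝ) / 2))⁻¹ * ∫ η : Rn n, ‖η‖ ^ 2 * Real.exp (-(2:ℝ) * ‖η‖ ^ 2) := by
    field_simp at hs' ⊢
    rw [← hs']; ring_nf
  rw [h2]
  congr 1
  rw [← Real.rpow_neg_one t, ← Real.rpow_neg ht0.le, ← Real.rpow_add ht0]
  ring_nf


set_option maxHeartbeats 2000000 in
/-- Low-frequency estimate for the term `(A - iB) e^{-t|ξ|²}`, where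
`A(ξ) = ∫ u(x)(cos(ξ·x) - 1) dx` and `B(ξ) = ∫ u(x) sin(ξ·x) dx`. -/
theorem stmt_17 (n : ℕ) (hn : 1 ≤ n) (δ : ℝ) (hδ : 0 < δ) :
    ∃ C > (0 : ℝ), ∀ u : Rn n → ℝ, MemL11 u →
      ∀ t : ℝ, 0 ≤ t →
        (∫ ξ in {ξ : Rn n | ‖ξ‖ ≤ δ},
            ‖(((∫ x : Rn n, u x * (Real.cos ((inner ℝ ξ x : ℝ)) - 1) : ℝ) : ℂ) -
                Complex.I * ((∫ x : Rn n, u x * Real.sin ((inner ℝ ξ x : ℝ)) : ℝ) : ℂ)) *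
              ((Real.exp (-t * ‖ξ‖ ^ 2) : ℝ) : ℂ)‖ ^ 2) ≤
          C * Norm11 u ^ 2 * (1 + t) ^ (-(((n : ℝ) + 2) / 2)) := by
  classical
  set p : ℝ := ((n : ℝ) + 2) / 2 with hp
  have hp0 : 0 ≤ p := by positivity
  set G : ℝ := ∫ η : Rn n, ‖η‖ ^ 2 * Real.exp (-(2:ℝ) * ‖η‖ ^ 2) with hGdef
  set V : ℝ := (volume (Metric.closedBall (0 : Rn n) δ)).toReal with hVdef
  have hG0 : 0 ≤ G := integral_nonneg fun η => by positivity
  have hV0 : 0 ≤ V := ENNReal.toReal_nonneg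
  have h2p : (0:ℝ) < (2:ℝ) ^ p := Real.rpow_pos_of_pos (by norm_num) _
  set K : ℝ := (2:ℝ) ^ p * (δ ^ 2 * V + G) with hKdef
  have hK0 : 0 ≤ K := by positivity
  refine ⟨4 * K + 1, by positivity, ?_⟩
  intro u hu t ht
  set N : ℝ := Norm11 u with hNdef
  have hN0 : 0 ≤ N := integral_nonneg fun x => by positivity
  have hNint : (∫ x : Rn n, (1 + ‖x‖) * |u x|) = N := rfl
  have hS : {ξ : Rn n | ‖ξ‖ ≤ δ} = Metric.closedBall (0 : Rn n) δ := by
    ext ξ; simp [Metric.mem_closedBall, dist_zero_right]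
  have h1t : (0:ℝ) < 1 + t := by linarith
  -- pointwise bound
  have hpt : ∀ ξ : Rn n,
      ‖(((∫ x : Rn n, u x * (Real.cos ((inner ℝ ξ x : ℝ)) - 1) : ℝ) : ℂ) -
          Complex.I * ((∫ x : Rn n, u x * Real.sin ((inner ℝ ξ x : ℝ)) : ℝ) : ℂ)) *
        ((Real.exp (-t * ‖ξ‖ ^ 2) : ℝ) : ℂ)‖ ^ 2
      ≤ (4 * N ^ 2) * (‖ξ‖ ^ 2 * Real.exp (-(2 * t) * ‖ξ‖ ^ 2)) := by
    intro ξ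
    have hgi : Integrable (fun x : Rn n => ‖ξ‖ * ((1 + ‖x‖) * |u x|)) := hu.2.const_mul _
    have habs : ∀ x : Rn n, |(inner ℝ ξ x : ℝ)| ≤ ‖ξ‖ * ‖x‖ := fun x => abs_real_inner_le_norm ξ x
    have hA : |∫ x : Rn n, u x * (Real.cos ((inner ℝ ξ x : ℝ)) - 1)| ≤ ‖ξ‖ * N := by
      calc |∫ x : Rn n, u x * (Real.cos ((inner ℝ ξ x : ℝ)) - 1)|
          ≤ ∫ x : Rn n, |u x| * |Real.cos ((inner ℝ ξ x : ℝ)) - 1| := by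
            simpa [abs_mul] using norm_integral_le_integral_norm (μ := (volume : Measure (Rn n)))
              (fun x : Rn n => u x * (Real.cos ((inner ℝ ξ x : ℝ)) - 1))
        _ ≤ ∫ x : Rn n, ‖ξ‖ * ((1 + ‖x‖) * |u x|) := by
            refine integral_mono_of_nonneg
              (Filter.Eventually.of_forall fun x => mul_nonneg (abs_nonneg _) (abs_nonneg _))
              hgi (Filter.Eventually.of_forall fun x => ?_)
            dsimp only
            have h1 := DP_abs_cos_sub_one_le ((inner ℝ ξ x : ℝ))
            have h2 := habs x
            have h3 := abs_nonneg (u x)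
            have h4 := norm_nonneg ξ
            have h5 := norm_nonneg x
            nlinarith
        _ = ‖ξ‖ * N := by rw [integral_const_mul, hNint]
    have hB : |∫ x : Rn n, u x * Real.sin ((inner ℝ ξ x : ℝ))| ≤ ‖ξ‖ * N := by
      calc |∫ x : Rn n, u x * Real.sin ((inner ℝ ξ x : ℝ))|
          ≤ ∫ x : Rn n, |u x| * |Real.sin ((inner ℝ ξ x : ℝ))| := by
            simpa [abs_mul] using norm_integral_le_integral_norm (μ := (volume : Measure (Rn n)))
              (fun x : Rn n => u x * Real.sin ((inner ℝ ξ x : ℝ)))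
        _ ≤ ∫ x : Rn n, ‖ξ‖ * ((1 + ‖x‖) * |u x|) := by
            refine integral_mono_of_nonneg
              (Filter.Eventually.of_forall fun x => mul_nonneg (abs_nonneg _) (abs_nonneg _))
              hgi (Filter.Eventually.of_forall fun x => ?_)
            dsimp only
            have h1 : |Real.sin ((inner ℝ ξ x : ℝ))| ≤ |(inner ℝ ξ x : ℝ)| := Real.abs_sin_le_abs
            have h2 := habs x
            have h3 := abs_nonneg (u x)
            have h4 := norm_nonneg ξ
            have h5 := norm_nonneg x
            nlinarith
        _ = ‖ξ‖ * N := by rw [integral_const_mul, hNint]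
    have hz : ‖(((∫ x : Rn n, u x * (Real.cos ((inner ℝ ξ x : ℝ)) - 1) : ℝ) : ℂ) -
        Complex.I * ((∫ x : Rn n, u x * Real.sin ((inner ℝ ξ x : ℝ)) : ℝ) : ℂ))‖
        ≤ 2 * (‖ξ‖ * N) := by
      calc ‖(((∫ x : Rn n, u x * (Real.cos ((inner ℝ ξ x : ℝ)) - 1) : ℝ) : ℂ) -
            Complex.I * ((∫ x : Rn n, u x * Real.sin ((inner ℝ ξ x : ℝ)) : ℝ) : ℂ))‖
          ≤ ‖(((∫ x : Rn n, u x * (Real.cos ((inner ℝ ξ x : ℝ)) - 1) : ℝ) : ℂ))‖ +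
            ‖Complex.I * ((∫ x : Rn n, u x * Real.sin ((inner ℝ ξ x : ℝ)) : ℝ) : ℂ)‖ :=
            norm_sub_le _ _
        _ = |∫ x : Rn n, u x * (Real.cos ((inner ℝ ξ x : ℝ)) - 1)| +
            |∫ x : Rn n, u x * Real.sin ((inner ℝ ξ x : ℝ))| := by
            rw [norm_mul, Complex.norm_I, one_mul, Complex.norm_real, Complex.norm_real,
              Real.norm_eq_abs, Real.norm_eq_abs]
        _ ≤ 2 * (‖ξ‖ * N) := by linarith
    have he2 : ‖((Real.exp (-t * ‖ξ‖ ^ 2) : ℝ) : ℂ)‖ ^ 2 = Real.exp (-(2 * t) * ‖ξ‖ ^ 2) := by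
      rw [Complex.norm_real, Real.norm_eq_abs, abs_of_nonneg (Real.exp_nonneg _), sq,
        ← Real.exp_add]
      congr 1; ring
    rw [norm_mul, mul_pow, he2]
    calc ‖(((∫ x : Rn n, u x * (Real.cos ((inner ℝ ξ x : ℝ)) - 1) : ℝ) : ℂ) -
          Complex.I * ((∫ x : Rn n, u x * Real.sin ((inner ℝ ξ x : ℝ)) : ℝ) : ℂ))‖ ^ 2 *
          Real.exp (-(2 * t) * ‖ξ‖ ^ 2)
        ≤ (2 * (‖ξ‖ * N)) ^ 2 * Real.exp (-(2 * t) * ‖ξ‖ ^ 2) :=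
          mul_le_mul_of_nonneg_right (pow_le_pow_left₀ (norm_nonneg _) hz 2) (Real.exp_nonneg _)
      _ = (4 * N ^ 2) * (‖ξ‖ ^ 2 * Real.exp (-(2 * t) * ‖ξ‖ ^ 2)) := by ring
  -- continuity facts
  have hcont : Continuous fun ξ : Rn n => ‖ξ‖ ^ 2 * Real.exp (-(2 * t) * ‖ξ‖ ^ 2) :=
    (continuous_norm.pow 2).mul ((continuous_const.mul (continuous_norm.pow 2)).rexp)
  have hint1 : IntegrableOn (fun ξ : Rn n => ‖ξ‖ ^ 2 * Real.exp (-(2 * t) * ‖ξ‖ ^ 2))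
      (Metric.closedBall (0 : Rn n) δ) :=
    hcont.continuousOn.integrableOn_compact (isCompact_closedBall _ _)
  have hgint : IntegrableOn (fun ξ : Rn n => (4 * N ^ 2) * (‖ξ‖ ^ 2 * Real.exp (-(2 * t) * ‖ξ‖ ^ 2)))
      (Metric.closedBall (0 : Rn n) δ) := hint1.const_mul _
  rw [hS]
  have hmono := integral_mono_of_nonneg
    (μ := volume.restrict (Metric.closedBall (0 : Rn n) δ))
    (f := fun ξ : Rn n => ‖(((∫ x : Rn n, u x * (Real.cos ((inner ℝ ξ x : ℝ)) - 1) : ℝ) : ℂ) -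
        Complex.I * ((∫ x : Rn n, u x * Real.sin ((inner ℝ ξ x : ℝ)) : ℝ) : ℂ)) *
        ((Real.exp (-t * ‖ξ‖ ^ 2) : ℝ) : ℂ)‖ ^ 2)
    (Filter.Eventually.of_forall fun ξ => by positivity) hgint
    (Filter.Eventually.of_forall hpt)
  -- bound on J
  have hJ : (∫ ξ in Metric.closedBall (0 : Rn n) δ, ‖ξ‖ ^ 2 * Real.exp (-(2 * t) * ‖ξ‖ ^ 2))
      ≤ K * (1 + t) ^ (-p) := by
    have hb : (0:ℝ) < (1 + t) ^ p := Real.rpow_pos_of_pos h1t _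
    rw [Real.rpow_neg h1t.le, ← div_eq_mul_inv, le_div_iff₀ hb]
    rcases le_total t 1 with h1 | h1
    · have hc : IntegrableOn (fun _ : Rn n => δ ^ 2) (Metric.closedBall (0 : Rn n) δ) :=
        integrableOn_const measure_closedBall_lt_top.ne
      have hle : (∫ ξ in Metric.closedBall (0 : Rn n) δ, ‖ξ‖ ^ 2 * Real.exp (-(2 * t) * ‖ξ‖ ^ 2))
          ≤ ∫ _ in Metric.closedBall (0 : Rn n) δ, δ ^ 2 := by
        refine setIntegral_mono_on hint1 hc measurableSet_closedBall fun ξ hξ => ?_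
        have hξδ : ‖ξ‖ ≤ δ := by simpa [dist_zero_right] using Metric.mem_closedBall.1 hξ
        have hexp : Real.exp (-(2 * t) * ‖ξ‖ ^ 2) ≤ 1 := by
          apply Real.exp_le_one_iff.2
          nlinarith [sq_nonneg ‖ξ‖]
        have h6 : ‖ξ‖ ^ 2 ≤ δ ^ 2 := by nlinarith [norm_nonneg ξ]
        calc ‖ξ‖ ^ 2 * Real.exp (-(2 * t) * ‖ξ‖ ^ 2) ≤ ‖ξ‖ ^ 2 * 1 :=
              mul_le_mul_of_nonneg_left hexp (sq_nonneg _)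
          _ = ‖ξ‖ ^ 2 := mul_one _
          _ ≤ δ ^ 2 := h6
      rw [setIntegral_const, smul_eq_mul] at hle
      have h2le : (1 + t) ^ p ≤ (2:ℝ) ^ p := Real.rpow_le_rpow h1t.le (by linarith) hp0
      have hJ0 : 0 ≤ (∫ ξ in Metric.closedBall (0 : Rn n) δ,
          ‖ξ‖ ^ 2 * Real.exp (-(2 * t) * ‖ξ‖ ^ 2)) :=
        integral_nonneg fun ξ => by positivity
      calc (∫ ξ in Metric.closedBall (0 : Rn n) δ, ‖ξ‖ ^ 2 * Real.exp (-(2 * t) * ‖ξ‖ ^ 2))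
            * (1 + t) ^ p
          ≤ (δ ^ 2 * V) * (2:ℝ) ^ p := by
            have : volume.real (Metric.closedBall (0:Rn n) δ) * δ ^ 2 = δ ^ 2 * V := by
              rw [hVdef, measureReal_def]; ring
            rw [this] at hle
            exact mul_le_mul hle h2le hb.le (by positivity)
        _ ≤ K := by rw [hKdef]; nlinarith [mul_nonneg h2p.le hG0]
    · have hle := setIntegral_le_integral (μ := (volume : Measure (Rn n)))
        (s := Metric.closedBall (0 : Rn n) δ) (DP_int_t (n := n) h1)
        (Filter.Eventually.of_forall fun ξ => by positivity)
      rw [DP_scale h1, ← hGdef, ← hp] at hle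
      have ht0 : (0:ℝ) < t := lt_of_lt_of_le one_pos h1
      have htp : (0:ℝ) < t ^ p := Real.rpow_pos_of_pos ht0 _
      rw [Real.rpow_neg ht0.le] at hle
      have h2le : (1 + t) ^ p ≤ (2:ℝ) ^ p * t ^ p := by
        rw [← Real.mul_rpow (by norm_num) ht0.le]
        exact Real.rpow_le_rpow h1t.le (by linarith) hp0
      have hJ0 : 0 ≤ (∫ ξ in Metric.closedBall (0 : Rn n) δ,
          ‖ξ‖ ^ 2 * Real.exp (-(2 * t) * ‖ξ‖ ^ 2)) :=
        integral_nonneg fun ξ => by positivity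
      calc (∫ ξ in Metric.closedBall (0 : Rn n) δ, ‖ξ‖ ^ 2 * Real.exp (-(2 * t) * ‖ξ‖ ^ 2))
            * (1 + t) ^ p
          ≤ ((t ^ p)⁻¹ * G) * ((2:ℝ) ^ p * t ^ p) :=
            mul_le_mul hle h2le hb.le (by positivity)
        _ = (2:ℝ) ^ p * G := by field_simp
        _ ≤ K := by
            rw [hKdef]
            nlinarith [mul_nonneg h2p.le (mul_nonneg (sq_nonneg δ) hV0)]
  calc (∫ ξ in Metric.closedBall (0 : Rn n) δ,
        ‖(((∫ x : Rn n, u x * (Real.cos ((inner ℝ ξ x : ℝ)) - 1) : ℝ) : ℂ) -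
            Complex.I * ((∫ x : Rn n, u x * Real.sin ((inner ℝ ξ x : ℝ)) : ℝ) : ℂ)) *
          ((Real.exp (-t * ‖ξ‖ ^ 2) : ℝ) : ℂ)‖ ^ 2)
      ≤ ∫ ξ in Metric.closedBall (0 : Rn n) δ,
          (4 * N ^ 2) * (‖ξ‖ ^ 2 * Real.exp (-(2 * t) * ‖ξ‖ ^ 2)) := hmono
    _ = (4 * N ^ 2) * ∫ ξ in Metric.closedBall (0 : Rn n) δ,
          ‖ξ‖ ^ 2 * Real.exp (-(2 * t) * ‖ξ‖ ^ 2) := integral_const_mul _ _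
    _ ≤ (4 * N ^ 2) * (K * (1 + t) ^ (-p)) :=
        mul_le_mul_of_nonneg_left hJ (by positivity)
    _ ≤ (4 * K + 1) * N ^ 2 * (1 + t) ^ (-p) := by
        have hrp : (0:ℝ) ≤ (1 + t) ^ (-p) := Real.rpow_nonneg h1t.le _
        nlinarith [sq_nonneg N]
end
end
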